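/- arXiv:1712.03053 — 4 statements merged into one kernel-verified Lean document; each statement's English description precedes it below -/
import Mathlib

section
/- There is an absolute constant C such that for every finite set R of at least two points in the Euclidean plane ℝ² and every set T of links obtained by arbitrarily orienting the edges of a minimum spanning tree of R, the chromatic number of the conflict graph G_1(T) is at most C. -/
noncomputable section

open scoped BigOperators

abbrev Pt : Type := EuclideanSpace ℝ (Fin 2)

instance : DecidableEq Pt := Classical.decEq _

abbrev Link : Type := Pt × Pt

def len (i : Link) : ℝ := dist i.1 i.2

def dd (i j : Link) : ℝ :=
  min (min (dist i.1 j.1) (dist i.1 j.2)) (min (dist i.2 j.1) (dist i.2 j.2))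

def PFeasible (α β : ℝ) (S : Finset Link) (P : Link → ℝ) : Prop :=
  (∀ i ∈ S, 0 < P i) ∧
  ∀ i ∈ S, β * ∑ j ∈ S.erase i, P j / dist j.1 i.2 ^ α ≤ P i / len i ^ α

def Feasible (α β : ℝ) (S : Finset Link) : Prop := ∃ P, PFeasible α β S P

def oblPower (α τ : ℝ) : Link → ℝ := fun i => len i ^ (τ * α)

def linkDiversity (S : Finset Link) : ℝ :=
  if h : S.Nonempty then S.sup' h len / S.inf' h len else 1

def logStar (x : ℝ) : ℕ := sInf {k : ℕ | (Real.logb 2)^[k] x ≤ 1}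

def IsSpanningTreeLinks (R : Finset Pt) (S : Finset Link) : Prop :=
  (∀ i ∈ S, i.1 ∈ R ∧ i.2 ∈ R ∧ i.1 ≠ i.2) ∧
  S.card + 1 = R.card ∧
  (SimpleGraph.fromRel fun x y : {p : Pt // p ∈ R} => ((x : Pt), (y : Pt)) ∈ S).Connected

def IsMSTLinks (R : Finset Pt) (S : Finset Link) : Prop :=
  IsSpanningTreeLinks R S ∧
  ∀ S' : Finset Link, IsSpanningTreeLinks R S' → ∑ i ∈ S, len i ≤ ∑ i ∈ S', len i

def emb (t : ℝ) : Pt := (WithLp.equiv 2 (Fin 2 → ℝ)).symm ![t, 0]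

def NodeDisjoint (i j : Link) : Prop :=
  i.1 ≠ j.1 ∧ i.1 ≠ j.2 ∧ i.2 ≠ j.1 ∧ i.2 ≠ j.2

def ptDiversity (R : Finset ℝ) : ℝ :=
  if h : R.offDiag.Nonempty then
    (R.offDiag.sup' h fun p => |p.1 - p.2|) / (R.offDiag.inf' h fun p => |p.1 - p.2|)
  else 1

def G1 (T : Finset Link) : SimpleGraph {i : Link // i ∈ T} :=
  SimpleGraph.fromRel fun i j => dd ↑i ↑j ≤ min (len ↑i) (len ↑j)

open Finset in
open scoped Classical in
lemma greedy_colorable {V : Type*} [Fintype V] (G : SimpleGraph V) (w : V → ℝ) (K : ℕ)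
    (h : ∀ v : V, ((Finset.univ.filter (fun u => G.Adj v u ∧ w v ≤ w u)).card ≤ K)) :
    G.Colorable (K + 1) := by
  classical
  have main : ∀ A : Finset V, ∃ c : V → Fin (K + 1),
      ∀ u ∈ A, ∀ v ∈ A, G.Adj u v → c u ≠ c v := by
    intro A
    induction A using Finset.strongInduction with
    | _ A ih =>
      rcases A.eq_empty_or_nonempty with rfl | hA
      · exact ⟨fun _ => 0, by simp⟩
      obtain ⟨m, hmA, hm⟩ := A.exists_min_image w hA
      obtain ⟨c, hc⟩ := ih (A.erase m) (Finset.erase_ssubset hmA)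
      set Nb := (A.erase m).filter (fun u => G.Adj m u) with hNb
      have hNbsub : Nb ⊆ Finset.univ.filter (fun u => G.Adj m u ∧ w m ≤ w u) := by
        intro u hu
        simp only [hNb, Finset.mem_filter, Finset.mem_erase] at hu
        exact Finset.mem_filter.mpr ⟨Finset.mem_univ _, hu.2, hm u hu.1.2⟩
      have hcard : (Nb.image c).card < K + 1 :=
        lt_of_le_of_lt (le_trans Finset.card_image_le
          (le_trans (Finset.card_le_card hNbsub) (h m))) (Nat.lt_succ_self K)
      have hfresh : ((Finset.univ : Finset (Fin (K+1))) \ (Nb.image c)).Nonempty := by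
        rw [← Finset.card_pos, Finset.card_sdiff_of_subset (Finset.subset_univ _)]
        simp only [Finset.card_univ, Fintype.card_fin]
        omega
      obtain ⟨col, hcol⟩ := hfresh
      have hcolnot : col ∉ Nb.image c := (Finset.mem_sdiff.mp hcol).2
      refine ⟨Function.update c m col, ?_⟩
      intro u hu v hv hadj
      have huv : u ≠ v := hadj.ne
      by_cases hum : u = m <;> by_cases hvm : v = m
      · exact absurd (hum.trans hvm.symm) huv
      · subst hum
        rw [Function.update_self, Function.update_of_ne hvm]
        intro hcontra
        exact hcolnot (Finset.mem_image.mpr ⟨v, Finset.mem_filter.mpr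
          ⟨Finset.mem_erase.mpr ⟨hvm, hv⟩, hadj⟩, hcontra.symm⟩)
      · subst hvm
        rw [Function.update_self, Function.update_of_ne hum]
        intro hcontra
        exact hcolnot (Finset.mem_image.mpr ⟨u, Finset.mem_filter.mpr
          ⟨Finset.mem_erase.mpr ⟨hum, hu⟩, hadj.symm⟩, hcontra⟩)
      · rw [Function.update_of_ne hum, Function.update_of_ne hvm]
        exact hc u (Finset.mem_erase.mpr ⟨hum, hu⟩) v (Finset.mem_erase.mpr ⟨hvm, hv⟩) hadj
  obtain ⟨c, hc⟩ := main Finset.univ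
  exact ⟨SimpleGraph.Coloring.mk c (fun {u v} hadj =>
    hc u (Finset.mem_univ u) v (Finset.mem_univ v) hadj)⟩

/-- The graph on the points of `R` induced by a set of links. -/
def graphOf (R : Finset Pt) (S : Finset Link) : SimpleGraph {p : Pt // p ∈ R} :=
  SimpleGraph.fromRel fun x y : {p : Pt // p ∈ R} => ((x : Pt), (y : Pt)) ∈ S

lemma graphOf_mono {R : Finset Pt} {S S' : Finset Link} (h : S ⊆ S') :
    graphOf R S ≤ graphOf R S' := by
  intro x y hxy
  rw [graphOf, SimpleGraph.fromRel_adj] at hxy ⊢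
  exact ⟨hxy.1, hxy.2.imp (fun a => h a) (fun a => h a)⟩

/-- A connected link-graph needs at least `R.card - 1` links. -/
lemma card_bound {R : Finset Pt} {S₀ : Finset Link}
    (hconn : (graphOf R S₀).Connected) : R.card ≤ S₀.card + 1 := by
  classical
  set G := graphOf R S₀ with hG
  have hne : Nonempty {p : Pt // p ∈ R} := hconn.nonempty
  obtain ⟨x₀⟩ := hne
  have key : ∀ v : {p : Pt // p ∈ R}, v ≠ x₀ → ∃ ℓ ∈ S₀,
      ((↑v = ℓ.1 ∨ ↑v = ℓ.2) ∧ ∃ u : {p : Pt // p ∈ R},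
        (↑u = ℓ.1 ∨ ↑u = ℓ.2) ∧ u ≠ v ∧ G.dist x₀ u < G.dist x₀ v) := by
    intro v hv
    obtain ⟨p, hp⟩ := (hconn x₀ v).exists_walk_length_eq_dist
    obtain ⟨u, hadj, q, hq⟩ := SimpleGraph.Walk.exists_eq_cons_of_ne hv p.reverse
    have hlen : q.length + 1 = G.dist x₀ v := by
      have := congrArg SimpleGraph.Walk.length hq
      simpa [hp] using this.symm
    have hdu : G.dist x₀ u < G.dist x₀ v := by
      have h1 : G.dist x₀ u ≤ q.reverse.length := SimpleGraph.dist_le _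
      rw [SimpleGraph.Walk.length_reverse] at h1
      omega
    have hadj' := hadj
    rw [hG, graphOf, SimpleGraph.fromRel_adj] at hadj'
    rcases hadj'.2 with hmem | hmem
    · exact ⟨(↑v, ↑u), hmem, Or.inl rfl, u, Or.inr rfl, fun h => hadj'.1 h.symm, hdu⟩
    · exact ⟨(↑u, ↑v), hmem, Or.inr rfl, u, Or.inl rfl, fun h => hadj'.1 h.symm, hdu⟩
  choose! f hfS hfend hsel using key
  have hinj : Set.InjOn f ((Finset.univ.erase x₀ : Finset {p : Pt // p ∈ R}) : Set _) := by
    intro a ha b hb hab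
    by_contra hne'
    have haa : a ≠ x₀ := (Finset.mem_erase.mp (by exact_mod_cast ha)).1
    have hbb : b ≠ x₀ := (Finset.mem_erase.mp (by exact_mod_cast hb)).1
    obtain ⟨ua, huaend, huane, hua⟩ := hsel a haa
    obtain ⟨ub, hubend, hubne, hub⟩ := hsel b hbb
    have hcoene : (↑a : Pt) ≠ ↑b := fun h => hne' (Subtype.ext h)
    have hends_a := hfend a haa
    have hends_b := hfend b hbb
    rw [hab] at hends_a huaend
    -- a and b are the two distinct endpoints of the common link f b
    have hua_b : ua = b := by
      apply Subtype.ext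
      rcases hends_a with h1 | h1 <;> rcases hends_b with h2 | h2 <;>
        rcases huaend with h3 | h3 <;>
        first
          | (exact absurd (h1.trans h2.symm) hcoene)
          | (exact h3.trans h2.symm)
          | (exfalso; exact huane (Subtype.ext (h3.trans h1.symm)))
    have hub_a : ub = a := by
      apply Subtype.ext
      rcases hends_a with h1 | h1 <;> rcases hends_b with h2 | h2 <;>
        rcases hubend with h3 | h3 <;>
        first
          | (exact absurd (h1.trans h2.symm) hcoene)
          | (exact h3.trans h1.symm)
          | (exfalso; exact hubne (Subtype.ext (h3.trans h2.symm)))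
    rw [hua_b] at hua
    rw [hub_a] at hub
    omega
  have hmaps : ∀ a ∈ (Finset.univ.erase x₀ : Finset {p : Pt // p ∈ R}), f a ∈ S₀ := by
    intro a ha
    exact hfS a (Finset.mem_erase.mp ha).1
  have hcard := Finset.card_le_card_of_injOn f hmaps hinj
  rw [Finset.card_erase_of_mem (Finset.mem_univ _), Finset.card_univ, Fintype.card_coe] at hcard
  omega

section Cut

variable {R : Finset Pt} {S : Finset Link} {e : Link}

/-- Walking in `graphOf R S`, staying reachable to an endpoint of `e` in the graph with
`e` erased. -/
lemma side_of_walk (he : e ∈ S) {A B v x : {p : Pt // p ∈ R}}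
    (hA : (↑A : Pt) = e.1) (hB : (↑B : Pt) = e.2)
    (p : (graphOf R S).Walk v x)
    (hx : (graphOf R (S.erase e)).Reachable x A ∨ (graphOf R (S.erase e)).Reachable x B) :
    (graphOf R (S.erase e)).Reachable v A ∨ (graphOf R (S.erase e)).Reachable v B := by
  classical
  induction p with
  | nil => exact hx
  | @cons v u x hadj p ih =>
    have hx' := ih hx
    rw [graphOf, SimpleGraph.fromRel_adj] at hadj
    have hvu : v ≠ u := hadj.1
    rcases hadj.2 with hmem | hmem
    · by_cases heq : ((↑v : Pt), (↑u : Pt)) = e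
      · -- v is an endpoint of e
        have h1 : (↑v : Pt) = e.1 := by rw [← heq]
        have : v = A := Subtype.ext (h1.trans hA.symm)
        exact Or.inl (this ▸ SimpleGraph.Reachable.refl _)
      · have hadj' : (graphOf R (S.erase e)).Adj v u := by
          rw [graphOf, SimpleGraph.fromRel_adj]
          exact ⟨hvu, Or.inl (Finset.mem_erase.mpr ⟨heq, hmem⟩)⟩
        exact hx'.imp (hadj'.reachable.trans) (hadj'.reachable.trans)
    · by_cases heq : ((↑u : Pt), (↑v : Pt)) = e
      · have h1 : (↑v : Pt) = e.2 := by rw [← heq]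
        have : v = B := Subtype.ext (h1.trans hB.symm)
        exact Or.inr (this ▸ SimpleGraph.Reachable.refl _)
      · have hadj' : (graphOf R (S.erase e)).Adj v u := by
          rw [graphOf, SimpleGraph.fromRel_adj]
          exact ⟨hvu, Or.inr (Finset.mem_erase.mpr ⟨heq, hmem⟩)⟩
        exact hx'.imp (hadj'.reachable.trans) (hadj'.reachable.trans)

/-- Side dichotomy: with `e` erased, every vertex still reaches an endpoint of `e`. -/
lemma side_dichotomy (hst : IsSpanningTreeLinks R S) (he : e ∈ S)
    {A B : {p : Pt // p ∈ R}} (hA : (↑A : Pt) = e.1) (hB : (↑B : Pt) = e.2)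
    (v : {p : Pt // p ∈ R}) :
    (graphOf R (S.erase e)).Reachable v A ∨ (graphOf R (S.erase e)).Reachable v B := by
  have hconn : (graphOf R S).Connected := hst.2.2
  obtain ⟨p⟩ := hconn v A
  exact side_of_walk he hA hB p (Or.inl (SimpleGraph.Reachable.refl _))

/-- With an edge of the spanning tree erased, its endpoints are not reachable. -/
lemma not_reachable_of_erase (hst : IsSpanningTreeLinks R S) (he : e ∈ S)
    {A B : {p : Pt // p ∈ R}} (hA : (↑A : Pt) = e.1) (hB : (↑B : Pt) = e.2) :
    ¬ (graphOf R (S.erase e)).Reachable A B := by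
  intro hAB
  have hpre : (graphOf R (S.erase e)).Preconnected := by
    intro v x
    have hv := side_dichotomy hst he hA hB v
    have hx := side_dichotomy hst he hA hB x
    have hv' : (graphOf R (S.erase e)).Reachable v A := by
      rcases hv with h | h
      · exact h
      · exact h.trans hAB.symm
    have hx' : (graphOf R (S.erase e)).Reachable x A := by
      rcases hx with h | h
      · exact h
      · exact h.trans hAB.symm
    exact hv'.trans hx'.symm
  have hconn : (graphOf R (S.erase e)).Connected :=
    haveI : Nonempty {p : Pt // p ∈ R} := ⟨A⟩
    SimpleGraph.Connected.mk hpre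
  have hcb := card_bound hconn
  rw [Finset.card_erase_of_mem he] at hcb
  have hS1 : 1 ≤ S.card := Finset.card_pos.mpr ⟨e, he⟩
  have := hst.2.1
  omega

/-- The cut property of minimum spanning trees. -/
lemma cut_property (hmst : IsMSTLinks R S) (he : e ∈ S)
    {A B U W : {p : Pt // p ∈ R}} (hA : (↑A : Pt) = e.1) (hB : (↑B : Pt) = e.2)
    (hUW : (↑U : Pt) ≠ ↑W)
    (hU : (graphOf R (S.erase e)).Reachable U A)
    (hW : (graphOf R (S.erase e)).Reachable W B) :
    len e ≤ dist (↑U : Pt) (↑W : Pt) := by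
  classical
  obtain ⟨hst, hmin⟩ := hmst
  set S' : Finset Link := insert ((↑U : Pt), (↑W : Pt)) (S.erase e) with hS'
  have hnotmem : ((↑U : Pt), (↑W : Pt)) ∉ S.erase e := by
    intro hmem
    apply not_reachable_of_erase hst he hA hB
    have hadj : (graphOf R (S.erase e)).Adj U W := by
      rw [graphOf, SimpleGraph.fromRel_adj]
      exact ⟨fun h => hUW (congrArg Subtype.val h), Or.inl hmem⟩
    exact (hU.symm.trans hadj.reachable).trans hW
  have hS1 : 1 ≤ S.card := Finset.card_pos.mpr ⟨e, he⟩
  have hstS' : IsSpanningTreeLinks R S' := by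
    refine ⟨?_, ?_, ?_⟩
    · intro i hi
      rcases Finset.mem_insert.mp hi with rfl | hi'
      · exact ⟨U.2, W.2, hUW⟩
      · exact hst.1 i (Finset.mem_of_mem_erase hi')
    · rw [hS', Finset.card_insert_of_notMem hnotmem, Finset.card_erase_of_mem he]
      have := hst.2.1
      omega
    · have hmono : graphOf R (S.erase e) ≤ graphOf R S' :=
        graphOf_mono (Finset.subset_insert _ _)
      have hadjUW : (graphOf R S').Adj U W := by
        rw [graphOf, SimpleGraph.fromRel_adj]
        exact ⟨fun h => hUW (congrArg Subtype.val h), Or.inl (Finset.mem_insert_self _ _)⟩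
      have hreach : ∀ v : {p : Pt // p ∈ R}, (graphOf R S').Reachable v A := by
        intro v
        rcases side_dichotomy hst he hA hB v with h | h
        · exact h.mono hmono
        · exact ((h.mono hmono).trans ((hW.mono hmono).symm.trans
            (hadjUW.reachable.symm.trans (hU.mono hmono)))) 
      haveI : Nonempty {p : Pt // p ∈ R} := ⟨A⟩
      exact SimpleGraph.Connected.mk (fun v x => (hreach v).trans (hreach x).symm)
  have hsum := hmin S' hstS'
  rw [hS', Finset.sum_insert hnotmem] at hsum
  have hsplit : ∑ i ∈ S, len i = len e + ∑ i ∈ S.erase e, len i :=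
    (Finset.add_sum_erase S len he).symm
  rw [hsplit] at hsum
  have : len ((↑U : Pt), (↑W : Pt)) = dist (↑U : Pt) (↑W : Pt) := rfl
  rw [this] at hsum
  linarith

end Cut

section Geometry

lemma coord_abs_le_norm (v : Pt) (i : Fin 2) : |v i| ≤ ‖v‖ := by
  rw [EuclideanSpace.norm_eq v, ← Real.sqrt_sq (abs_nonneg (v i))]
  apply Real.sqrt_le_sqrt
  rw [sq_abs, Fin.sum_univ_two]
  fin_cases i <;> simp <;> nlinarith [sq_nonneg (v 0), sq_nonneg (v 1)]

lemma norm_le_coords (v : Pt) : ‖v‖ ≤ |v 0| + |v 1| := by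
  rw [EuclideanSpace.norm_eq, Fin.sum_univ_two,
    ← Real.sqrt_sq (by positivity : (0:ℝ) ≤ |v 0| + |v 1|)]
  apply Real.sqrt_le_sqrt
  simp only [Real.norm_eq_abs]
  nlinarith [abs_nonneg (v 0), abs_nonneg (v 1), sq_abs (v 0), sq_abs (v 1)]

lemma abs_sub_lt_one_of_floor_eq {x y : ℝ} (h : ⌊x⌋ = ⌊y⌋) : |x - y| < 1 := by
  have h1 := Int.floor_le x
  have h2 := Int.lt_floor_add_one x
  have h3 := Int.floor_le y
  have h4 := Int.lt_floor_add_one y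
  rw [h] at h1 h2
  rw [abs_lt]; constructor <;> linarith

/-- Symmetric form of the cut property. -/
lemma cut_property' {R : Finset Pt} {S : Finset Link} {e : Link}
    (hmst : IsMSTLinks R S) (he : e ∈ S) {P Q U W : {p : Pt // p ∈ R}}
    (hPQ : ((↑P : Pt) = e.1 ∧ (↑Q : Pt) = e.2) ∨ ((↑P : Pt) = e.2 ∧ (↑Q : Pt) = e.1))
    (hUW : (↑U : Pt) ≠ ↑W)
    (hU : (graphOf R (S.erase e)).Reachable U P)
    (hW : (graphOf R (S.erase e)).Reachable W Q) :
    len e ≤ dist (↑U : Pt) (↑W : Pt) := by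
  rcases hPQ with ⟨hP, hQ⟩ | ⟨hP, hQ⟩
  · exact cut_property hmst he hP hQ hUW hU hW
  · rw [dist_comm]
    exact cut_property hmst he hQ hP (Ne.symm hUW) hW hU

/-- Symmetric form of non-reachability. -/
lemma not_reachable' {R : Finset Pt} {S : Finset Link} {e : Link}
    (hst : IsSpanningTreeLinks R S) (he : e ∈ S) {P Q : {p : Pt // p ∈ R}}
    (hPQ : ((↑P : Pt) = e.1 ∧ (↑Q : Pt) = e.2) ∨ ((↑P : Pt) = e.2 ∧ (↑Q : Pt) = e.1)) :
    ¬ (graphOf R (S.erase e)).Reachable P Q := by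
  rcases hPQ with ⟨hP, hQ⟩ | ⟨hP, hQ⟩
  · exact not_reachable_of_erase hst he hP hQ
  · exact fun h => not_reachable_of_erase hst he hQ hP h.symm

/-- Symmetric form of the side dichotomy. -/
lemma side_dichotomy' {R : Finset Pt} {S : Finset Link} {e : Link}
    (hst : IsSpanningTreeLinks R S) (he : e ∈ S) {P Q : {p : Pt // p ∈ R}}
    (hPQ : ((↑P : Pt) = e.1 ∧ (↑Q : Pt) = e.2) ∨ ((↑P : Pt) = e.2 ∧ (↑Q : Pt) = e.1))
    (v : {p : Pt // p ∈ R}) :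
    (graphOf R (S.erase e)).Reachable v P ∨ (graphOf R (S.erase e)).Reachable v Q := by
  rcases hPQ with ⟨hP, hQ⟩ | ⟨hP, hQ⟩
  · exact side_dichotomy hst he hP hQ v
  · exact (side_dichotomy hst he hQ hP v).symm

/-- The core geometric contradiction: two distinct MST links, both of length at least `ℓ`,
cannot have nearby endpoints together with nearly parallel directions. -/
lemma core_contradiction {R : Finset Pt} {S : Finset Link}
    (hmst : IsMSTLinks R S) {f f' : Link} (hf : f ∈ S) (hf' : f' ∈ S) (hne : f' ≠ f)
    {p q p' q' : Pt}
    (hpq : (p = f.1 ∧ q = f.2) ∨ (p = f.2 ∧ q = f.1))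
    (hpq' : (p' = f'.1 ∧ q' = f'.2) ∨ (p' = f'.2 ∧ q' = f'.1))
    {ℓ : ℝ} (hℓ : 0 < ℓ)
    (hL' : ℓ ≤ dist p' q') (hLL' : dist p' q' ≤ dist p q)
    (hpp' : dist p p' < ℓ/5)
    (huu' : ‖(dist p q)⁻¹ • (q - p) - (dist p' q')⁻¹ • (q' - p')‖ < 1/10) : False := by
  classical
  obtain ⟨hst, _⟩ := id hmst
  obtain ⟨hf1R, hf2R, hfne⟩ := hst.1 f hf
  obtain ⟨hf1R', hf2R', hfne'⟩ := hst.1 f' hf'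
  set L := dist p q with hLdef
  set L' := dist p' q' with hL'def
  have hL : ℓ ≤ L := le_trans hL' hLL'
  have hL0 : 0 < L := lt_of_lt_of_le hℓ hL
  have hL'0 : 0 < L' := lt_of_lt_of_le hℓ hL'
  have hlenf : len f = L := by
    rcases hpq with ⟨h1, h2⟩ | ⟨h1, h2⟩ <;> rw [len, hLdef, h1, h2]
    exact (dist_comm _ _)
  have hpR : p ∈ R := by rcases hpq with ⟨h1, _⟩ | ⟨h1, _⟩ <;> rw [h1] <;> assumption
  have hqR : q ∈ R := by rcases hpq with ⟨_, h1⟩ | ⟨_, h1⟩ <;> rw [h1] <;> assumption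
  have hpR' : p' ∈ R := by rcases hpq' with ⟨h1, _⟩ | ⟨h1, _⟩ <;> rw [h1] <;> assumption
  have hqR' : q' ∈ R := by rcases hpq' with ⟨_, h1⟩ | ⟨_, h1⟩ <;> rw [h1] <;> assumption
  set P : {x : Pt // x ∈ R} := ⟨p, hpR⟩
  set Q : {x : Pt // x ∈ R} := ⟨q, hqR⟩
  set P' : {x : Pt // x ∈ R} := ⟨p', hpR'⟩
  set Q' : {x : Pt // x ∈ R} := ⟨q', hqR'⟩
  have hPQor : ((↑P : Pt) = f.1 ∧ (↑Q : Pt) = f.2) ∨ ((↑P : Pt) = f.2 ∧ (↑Q : Pt) = f.1) := hpq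
  set G' := graphOf R (S.erase f) with hG'
  -- f' is an edge of the erased graph
  have hf'mem : f' ∈ S.erase f := Finset.mem_erase.mpr ⟨hne, hf'⟩
  have hp'q'ne : p' ≠ q' := by
    rcases hpq' with ⟨h1, h2⟩ | ⟨h1, h2⟩ <;> rw [h1, h2]
    · exact hfne'
    · exact hfne'.symm
  have hadj : G'.Adj P' Q' := by
    rw [hG', graphOf, SimpleGraph.fromRel_adj]
    refine ⟨fun h => hp'q'ne (congrArg Subtype.val h), ?_⟩
    rcases hpq' with ⟨h1, h2⟩ | ⟨h1, h2⟩
    · left; show ((p' : Pt), (q' : Pt)) ∈ S.erase f; rw [h1, h2]; exact hf'mem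
    · right; show ((q' : Pt), (p' : Pt)) ∈ S.erase f; rw [h2, h1]; exact hf'mem
  -- direction vectors
  set u : Pt := L⁻¹ • (q - p) with hu
  set u' : Pt := L'⁻¹ • (q' - p') with hu'
  have hqp : q - p = L • u := by rw [hu, smul_inv_smul₀ hL0.ne']
  have hqp' : q' - p' = L' • u' := by rw [hu', smul_inv_smul₀ hL'0.ne']
  have hnu : ‖u‖ = 1 := by
    rw [hu, norm_smul, Real.norm_eq_abs, abs_inv, abs_of_pos hL0, ← dist_eq_norm,
      dist_comm q p, ← hLdef]
    field_simp
  rcases side_dichotomy' hst hf hPQor P' with hside | hside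
  · -- P' on the P side; so is Q'; apply the cut property to (Q', Q)
    have hsideQ' : G'.Reachable Q' P := hadj.symm.reachable.trans hside
    have hqq' : (↑Q' : Pt) ≠ ↑Q := by
      intro h
      have : Q' = Q := Subtype.ext h
      rw [this] at hsideQ'
      exact not_reachable' hst hf hPQor hsideQ'.symm
    have hcut := cut_property' hmst hf hPQor hqq' hsideQ' (SimpleGraph.Reachable.refl Q)
    -- but q and q' are close
    have hdist : dist q' q < L := by
      have e1 : q' - q = (p' - p) + (L' • u' - L • u) := by
        rw [← hqp, ← hqp']; abel
      have e2 : dist q' q = ‖q' - q‖ := dist_eq_norm _ _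
      have e3 : ‖q' - q‖ ≤ ‖p' - p‖ + ‖L' • u' - L • u‖ := by
        rw [e1]; exact norm_add_le _ _
      have e4 : ‖L' • u' - L • u‖ ≤ ‖L' • u' - L' • u‖ + ‖L' • u - L • u‖ := by
        have : L' • u' - L • u = (L' • u' - L' • u) + (L' • u - L • u) := by abel
        rw [this]; exact norm_add_le _ _
      have e5 : ‖L' • u' - L' • u‖ = L' * ‖u' - u‖ := by
        rw [← smul_sub, norm_smul, Real.norm_eq_abs, abs_of_pos hL'0]
      have e6 : ‖L' • u - L • u‖ = (L - L') * ‖u‖ := by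
        rw [← sub_smul, norm_smul, Real.norm_eq_abs, abs_of_nonpos (by linarith), neg_sub]
      have e7 : ‖u' - u‖ < 1/10 := by rw [norm_sub_rev]; exact huu'
      have e8 : ‖p' - p‖ < ℓ/5 := by
        rw [← dist_eq_norm, dist_comm]; exact hpp'
      have := e3.trans (by linarith : ‖p' - p‖ + ‖L' • u' - L • u‖ ≤
        ‖p' - p‖ + L' * ‖u' - u‖ + (L - L') * ‖u‖)
      rw [hnu] at this
      rw [e2]
      nlinarith
    rw [hlenf] at hcut
    have : dist (↑Q' : Pt) (↑Q : Pt) = dist q' q := rfl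
    rw [this] at hcut
    linarith
  · -- P' on the Q side; apply the cut property to (P, P')
    have hpp'ne : (↑P : Pt) ≠ ↑P' := by
      intro h
      have : P = P' := Subtype.ext h
      rw [← this] at hside
      exact not_reachable' hst hf hPQor hside
    have hcut := cut_property' hmst hf hPQor hpp'ne (SimpleGraph.Reachable.refl P) hside
    rw [hlenf] at hcut
    have : dist (↑P : Pt) (↑P' : Pt) = dist p p' := rfl
    rw [this] at hcut
    linarith

end Geometry

section NeighborBound

open Finset


/-- Each MST link has at most `41^4` conflicting links that are at least as long. -/
lemma neighbor_bound {R : Finset Pt} {S : Finset Link} (hmst : IsMSTLinks R S)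
    {e : Link} (he : e ∈ S) :
    (S.filter (fun f => f ≠ e ∧ len e ≤ len f ∧ dd e f ≤ len e)).card ≤ 41 ^ 4 := by
  classical
  obtain ⟨hst, _⟩ := id hmst
  obtain ⟨he1R, he2R, hene⟩ := hst.1 e he
  set ℓ := len e with hℓdef
  have hℓ : 0 < ℓ := dist_pos.mpr hene
  set N := S.filter (fun f => f ≠ e ∧ len e ≤ len f ∧ dd e f ≤ len e) with hN
  by_contra hcon
  push_neg at hcon
  set s : ℝ := ℓ / 10 with hs
  have hs0 : 0 < s := by positivity
  set pfun : Link → Pt := fun f => if dist f.1 e.1 ≤ ℓ ∨ dist f.1 e.2 ≤ ℓ then f.1 else f.2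
    with hpfun
  set qfun : Link → Pt := fun f => if dist f.1 e.1 ≤ ℓ ∨ dist f.1 e.2 ≤ ℓ then f.2 else f.1
    with hqfun
  set ufun : Link → Pt := fun f => (dist (pfun f) (qfun f))⁻¹ • (qfun f - pfun f) with hufun
  -- basic facts about members of N
  have hNfact : ∀ f ∈ N, f ∈ S ∧ f ≠ e ∧ ℓ ≤ len f ∧ dd e f ≤ ℓ := by
    intro f hfN
    obtain ⟨h1, h2, h3, h4⟩ := Finset.mem_filter.mp hfN
    exact ⟨h1, h2, h3, h4⟩
  have hor : ∀ f ∈ N, (pfun f = f.1 ∧ qfun f = f.2) ∨ (pfun f = f.2 ∧ qfun f = f.1) := by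
    intro f _
    by_cases h : dist f.1 e.1 ≤ ℓ ∨ dist f.1 e.2 ≤ ℓ
    · left; simp [hpfun, hqfun, h]
    · right; simp [hpfun, hqfun, h]
  have hlen : ∀ f ∈ N, dist (pfun f) (qfun f) = len f := by
    intro f hfN
    rcases hor f hfN with ⟨h1, h2⟩ | ⟨h1, h2⟩ <;> rw [h1, h2, len]
    exact dist_comm _ _
  have hlenpos : ∀ f ∈ N, 0 < dist (pfun f) (qfun f) := by
    intro f hfN
    rw [hlen f hfN]
    exact lt_of_lt_of_le hℓ (hNfact f hfN).2.2.1
  have hclose : ∀ f ∈ N, dist (pfun f) e.1 ≤ ℓ ∨ dist (pfun f) e.2 ≤ ℓ := by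
    intro f hfN
    have hdd := (hNfact f hfN).2.2.2
    rw [dd] at hdd
    by_cases h : dist f.1 e.1 ≤ ℓ ∨ dist f.1 e.2 ≤ ℓ
    · have : pfun f = f.1 := by simp [hpfun, h]
      rw [this]; exact h
    · have hp2 : pfun f = f.2 := by simp [hpfun, h]
      push_neg at h
      rw [hp2]
      rcases min_le_iff.mp hdd with h' | h' <;> rcases min_le_iff.mp h' with h'' | h''
      · exact absurd ((dist_comm e.1 f.1) ▸ h'') (not_le.mpr h.1)
      · exact Or.inl ((dist_comm e.1 f.2) ▸ h'')
      · exact absurd ((dist_comm e.2 f.1) ▸ h'') (not_le.mpr h.2)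
      · exact Or.inr ((dist_comm e.2 f.2) ▸ h'')
  have hball : ∀ f ∈ N, dist (pfun f) e.1 ≤ 2 * ℓ := by
    intro f hfN
    rcases hclose f hfN with h | h
    · linarith
    · have : dist (pfun f) e.1 ≤ dist (pfun f) e.2 + dist e.2 e.1 := dist_triangle _ _ _
      have h2 : dist e.2 e.1 = ℓ := by rw [dist_comm]; rfl
      linarith
  have hnormu : ∀ f ∈ N, ‖ufun f‖ = 1 := by
    intro f hfN
    have h0 := hlenpos f hfN
    rw [hufun]
    simp only
    rw [norm_smul, Real.norm_eq_abs, abs_inv, abs_of_pos h0, ← dist_eq_norm,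
      dist_comm (qfun f) (pfun f)]
    exact inv_mul_cancel₀ h0.ne'
  -- the bucket map
  set Φ : Link → (ℤ × ℤ) × (ℤ × ℤ) := fun f =>
    ((⌊((pfun f - e.1) 0) / s⌋, ⌊((pfun f - e.1) 1) / s⌋),
     (⌊(ufun f) 0 * 20⌋, ⌊(ufun f) 1 * 20⌋)) with hΦ
  set B : Finset ((ℤ × ℤ) × (ℤ × ℤ)) :=
    (Finset.Icc (-20 : ℤ) 20 ×ˢ Finset.Icc (-20 : ℤ) 20) ×ˢ
    (Finset.Icc (-20 : ℤ) 20 ×ˢ Finset.Icc (-20 : ℤ) 20) with hB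
  have hcardB : B.card = 41 ^ 4 := by
    rw [hB]
    simp [Int.card_Icc]
  have hfloor_bound : ∀ x : ℝ, |x| ≤ 20 → ⌊x⌋ ∈ Finset.Icc (-20 : ℤ) 20 := by
    intro x hx
    rw [abs_le] at hx
    rw [Finset.mem_Icc]
    constructor
    · exact Int.le_floor.mpr (by exact_mod_cast hx.1)
    · have := Int.floor_le_floor hx.2
      simpa using this
  have hmaps : ∀ f ∈ N, Φ f ∈ B := by
    intro f hfN
    have hb := hball f hfN
    have hcoord : ∀ i : Fin 2, |((pfun f - e.1) i) / s| ≤ 20 := by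
      intro i
      have h1 : |(pfun f - e.1) i| ≤ ‖pfun f - e.1‖ := coord_abs_le_norm _ i
      have h2 : ‖pfun f - e.1‖ = dist (pfun f) e.1 := (dist_eq_norm _ _).symm
      rw [abs_div, abs_of_pos hs0, div_le_iff₀ hs0]
      rw [h2] at h1
      have : (20 : ℝ) * s = 2 * ℓ := by rw [hs]; ring
      linarith
    have hucoord : ∀ i : Fin 2, |(ufun f) i * 20| ≤ 20 := by
      intro i
      have h1 : |(ufun f) i| ≤ ‖ufun f‖ := coord_abs_le_norm _ i
      rw [hnormu f hfN] at h1
      rw [abs_mul]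
      have : |(20 : ℝ)| = 20 := by norm_num
      rw [this]
      linarith
    rw [hΦ, hB]
    simp only [Finset.mem_product]
    exact ⟨⟨hfloor_bound _ (hcoord 0), hfloor_bound _ (hcoord 1)⟩,
      ⟨hfloor_bound _ (hucoord 0), hfloor_bound _ (hucoord 1)⟩⟩
  clear_value Φ
  clear_value B
  have hBN : B.card < N.card := by rw [hcardB]; exact hcon
  have pig : ∃ x ∈ N, ∃ y ∈ N, x ≠ y ∧ Φ x = Φ y :=
    Finset.exists_ne_map_eq_of_card_lt_of_maps_to hBN hmaps
  obtain ⟨f, hfN, f', hf'N, hff', hΦeq⟩ := pig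
  -- extract closeness from equal buckets
  rw [hΦ] at hΦeq
  simp only [Prod.mk.injEq] at hΦeq
  obtain ⟨⟨hΦ1, hΦ2⟩, hΦ3, hΦ4⟩ := hΦeq
  have hd0 : |(pfun f - e.1) 0 - (pfun f' - e.1) 0| < s := by
    have h := abs_sub_lt_one_of_floor_eq (x := ((pfun f - e.1) 0) / s)
      (y := ((pfun f' - e.1) 0) / s) hΦ1
    rw [div_sub_div_same, abs_div, abs_of_pos hs0, div_lt_one hs0] at h
    exact h
  have hd1 : |(pfun f - e.1) 1 - (pfun f' - e.1) 1| < s := by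
    have h := abs_sub_lt_one_of_floor_eq (x := ((pfun f - e.1) 1) / s)
      (y := ((pfun f' - e.1) 1) / s) hΦ2
    rw [div_sub_div_same, abs_div, abs_of_pos hs0, div_lt_one hs0] at h
    exact h
  have hu0 : |(ufun f) 0 - (ufun f') 0| < 1 / 20 := by
    have h := abs_sub_lt_one_of_floor_eq (x := (ufun f) 0 * 20) (y := (ufun f') 0 * 20) hΦ3
    rw [← sub_mul, abs_mul] at h
    have : |(20:ℝ)| = 20 := by norm_num
    rw [this] at h
    linarith [abs_nonneg ((ufun f) 0 - (ufun f') 0)]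
  have hu1 : |(ufun f) 1 - (ufun f') 1| < 1 / 20 := by
    have h := abs_sub_lt_one_of_floor_eq (x := (ufun f) 1 * 20) (y := (ufun f') 1 * 20) hΦ4
    rw [← sub_mul, abs_mul] at h
    have : |(20:ℝ)| = 20 := by norm_num
    rw [this] at h
    linarith [abs_nonneg ((ufun f) 1 - (ufun f') 1)]
  have hpp' : dist (pfun f) (pfun f') < ℓ / 5 := by
    rw [dist_eq_norm]
    have hdiff : pfun f - pfun f' = (pfun f - e.1) - (pfun f' - e.1) := by abel
    calc ‖pfun f - pfun f'‖ ≤ |(pfun f - pfun f') 0| + |(pfun f - pfun f') 1| :=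
          norm_le_coords _
      _ < ℓ / 5 := by
          have c0 : (pfun f - pfun f') 0 = (pfun f - e.1) 0 - (pfun f' - e.1) 0 := by
            rw [hdiff]; simp
          have c1 : (pfun f - pfun f') 1 = (pfun f - e.1) 1 - (pfun f' - e.1) 1 := by
            rw [hdiff]; simp
          rw [c0, c1]
          have : s + s = ℓ / 5 := by rw [hs]; ring
          linarith
  have huu' : ‖ufun f - ufun f'‖ < 1 / 10 := by
    calc ‖ufun f - ufun f'‖ ≤ |(ufun f - ufun f') 0| + |(ufun f - ufun f') 1| :=
          norm_le_coords _
      _ < 1 / 10 := by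
          have c0 : (ufun f - ufun f') 0 = (ufun f) 0 - (ufun f') 0 := by simp
          have c1 : (ufun f - ufun f') 1 = (ufun f) 1 - (ufun f') 1 := by simp
          rw [c0, c1]
          linarith
  -- apply the core contradiction, to the longer of the two links
  obtain ⟨hfS, hfe, hflen, hfdd⟩ := hNfact f hfN
  obtain ⟨hf'S, hf'e, hf'len, hf'dd⟩ := hNfact f' hf'N
  rcases le_total (len f') (len f) with hcase | hcase
  · refine core_contradiction hmst hfS hf'S (Ne.symm hff') (hor f hfN) (hor f' hf'N) hℓ
      ?_ ?_ hpp' ?_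
    · rw [hlen f' hf'N]; exact hf'len
    · rw [hlen f' hf'N, hlen f hfN]; exact hcase
    · exact huu'
  · refine core_contradiction hmst hf'S hfS hff' (hor f' hf'N) (hor f hfN) hℓ
      ?_ ?_ ?_ ?_
    · rw [hlen f hfN]; exact hflen
    · rw [hlen f' hf'N, hlen f hfN]; exact hcase
    · rw [dist_comm]; exact hpp'
    · rw [norm_sub_rev]; exact huu'

end NeighborBound

lemma dd_comm (i j : Link) : dd i j = dd j i := by
  rw [dd, dd, min_min_min_comm]
  simp [dist_comm]

/-- There is an absolute constant `C` bounding the chromatic number of the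
conflict graph `G_1(T)` of any arbitrarily-oriented MST `T` of at least two points in the
plane. -/
theorem mst_conflict_graph_chromatic_bound :
    ∃ C : ℕ, ∀ R : Finset Pt, 2 ≤ R.card →
      ∀ T : Finset Link, IsMSTLinks R T →
        (G1 T).chromaticNumber ≤ (C : ℕ∞) := by
  classical
  refine ⟨41 ^ 4 + 1, ?_⟩
  intro R hR T hmst
  have hcol : (G1 T).Colorable (41 ^ 4 + 1) := by
    apply greedy_colorable (G1 T) (fun v => len ↑v) (41 ^ 4)
    intro v
    have hsub := neighbor_bound hmst v.2
    refine le_trans (Finset.card_le_card_of_injOn (fun u => (↑u : Link)) ?_ ?_) hsub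
    · intro u hu
      obtain ⟨-, hadj, hle⟩ := Finset.mem_filter.mp hu
      have hadj' := hadj
      rw [G1, SimpleGraph.fromRel_adj] at hadj'
      obtain ⟨hne, hdd⟩ := hadj'
      have hdd' : dd (↑v : Link) ↑u ≤ min (len (↑v : Link)) (len (↑u : Link)) := by
        rcases hdd with h | h
        · exact h
        · rw [dd_comm]; rw [min_comm]; exact h
      rw [min_eq_left hle] at hdd'
      refine Finset.mem_filter.mpr ⟨u.2, ?_, hle, hdd'⟩
      exact fun h => hne (Subtype.ext h).symm
    · intro a _ b _ hab
      exact Subtype.ext hab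
  have := hcol.chromaticNumber_le
  exact_mod_cast this
end
end

section
/- Let α > 0, K ≥ 0, and let S be a finite set of links in the Euclidean plane such that for every i ∈ S, Σ_{j ∈ S, j ≠ i, l_j ≥ l_i} min{1, l_i^α / d(i,j)^α} ≤ K. Then S can be partitioned into at most ⌊K⌋ + 1 subsets S¹, …, Sᵗ such that for each k and each link i ∈ Sᵏ, Σ_{j ∈ Sᵏ, j ≠ i, l_j ≥ l_i} min{1, l_i^α / d(i,j)^α} < 1. -/
noncomputable section

open scoped BigOperators

namespace IRef

def trm (α : ℝ) (i j : Link) : ℝ := min 1 (len i ^ α / dd i j ^ α)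
lemma len_nonneg (i : Link) : 0 ≤ len i := dist_nonneg
lemma dd_nonneg (i j : Link) : 0 ≤ dd i j :=
  le_min (le_min dist_nonneg dist_nonneg) (le_min dist_nonneg dist_nonneg)
lemma trm_nonneg (α : ℝ) (i j : Link) : 0 ≤ trm α i j :=
  le_min zero_le_one
    (div_nonneg (Real.rpow_nonneg (len_nonneg i) α) (Real.rpow_nonneg (dd_nonneg i j) α))
lemma dd_comm (i j : Link) : dd i j = dd j i := by
  unfold dd
  rw [min_min_min_comm, dist_comm j.1 i.1, dist_comm j.1 i.2, dist_comm j.2 i.1,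
    dist_comm j.2 i.2]
lemma trm_comm (α : ℝ) {i j : Link} (h : len i = len j) : trm α i j = trm α j i := by
  unfold trm; rw [h, dd_comm]

def bfun (α : ℝ) (S' : Finset Link) (c' : Link → ℕ) (i : Link) (k : ℕ) : ℝ :=
  ∑ j ∈ S'.filter (fun j => c' j = k), trm α i j

def Afun (α : ℝ) (G : Finset Link) {t : ℕ} (π : {x // x ∈ G} → Fin t)
    (x : {x // x ∈ G}) (k : ℕ) : ℝ :=
  ∑ y ∈ G.attach, if y ≠ x ∧ (π y : ℕ) = k then trm α (↑x) (↑y) else 0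

def Efun (α : ℝ) (S' : Finset Link) (c' : Link → ℕ) (G : Finset Link) {t : ℕ}
    (π : {x // x ∈ G} → Fin t) : ℝ :=
  (∑ x ∈ G.attach, bfun α S' c' ↑x ↑(π x)) + (1 / 2) * ∑ x ∈ G.attach, Afun α G π x ↑(π x)

lemma Afun_congr (α : ℝ) (G : Finset Link) {t : ℕ} (π π' : {x // x ∈ G} → Fin t)
    (x : {x // x ∈ G}) (k : ℕ) (h : ∀ y, y ≠ x → π y = π' y) :
    Afun α G π x k = Afun α G π' x k := by
  unfold Afun
  refine Finset.sum_congr rfl fun y _ => ?_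
  by_cases hy : y = x
  · simp [hy]
  · rw [h y hy]

lemma Afun_update (α : ℝ) (G : Finset Link) {t : ℕ} (π₀ : {x // x ∈ G} → Fin t)
    (x₀ x : {x // x ∈ G}) (hx : x ≠ x₀) (k' : Fin t) (k : ℕ) :
    Afun α G (Function.update π₀ x₀ k') x k
      = Afun α G π₀ x k
        + ((if (k' : ℕ) = k then trm α (↑x) (↑x₀) else 0)
            - (if (π₀ x₀ : ℕ) = k then trm α (↑x) (↑x₀) else 0)) := by
  have hx₀ : x₀ ∈ G.attach := G.mem_attach x₀
  unfold Afun
  rw [← Finset.add_sum_erase _ _ hx₀,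
      ← Finset.add_sum_erase _
        (fun y : {x // x ∈ G} => if y ≠ x ∧ (π₀ y : ℕ) = k then trm α (↑x) (↑y) else 0) hx₀]
  have h1 : ∀ y ∈ G.attach.erase x₀,
      (if y ≠ x ∧ ((Function.update π₀ x₀ k' y : Fin t) : ℕ) = k then trm α (↑x) (↑y) else 0)
      = (if y ≠ x ∧ (π₀ y : ℕ) = k then trm α (↑x) (↑y) else 0) := by
    intro y hy
    rw [Function.update_of_ne (Finset.ne_of_mem_erase hy)]
  rw [Finset.sum_congr rfl h1, Function.update_self,
    if_congr (and_iff_right (Ne.symm hx)) rfl rfl,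
    if_congr (and_iff_right (Ne.symm hx)) rfl rfl]
  ring

lemma Afun_erase (α : ℝ) (G : Finset Link) {t : ℕ}
    (hlen : ∀ a ∈ G, ∀ b ∈ G, len a = len b)
    (π₀ : {x // x ∈ G} → Fin t) (x₀ : {x // x ∈ G}) (k : ℕ) :
    ∑ x ∈ G.attach.erase x₀, (if k = (π₀ x : ℕ) then trm α (↑x) (↑x₀) else 0)
      = Afun α G π₀ x₀ k := by
  unfold Afun
  rw [← Finset.sum_erase G.attach (a := x₀)
    (f := fun y => if y ≠ x₀ ∧ (π₀ y : ℕ) = k then trm α (↑x₀) (↑y) else 0) (by simp)]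
  refine Finset.sum_congr rfl fun y hy => ?_
  have hyx : y ≠ x₀ := Finset.ne_of_mem_erase hy
  rw [if_congr (and_iff_right hyx) rfl rfl, if_congr eq_comm rfl rfl]
  by_cases hk : (π₀ y : ℕ) = k
  · rw [if_pos hk, if_pos hk, trm_comm α (hlen _ y.2 _ x₀.2)]
  · rw [if_neg hk, if_neg hk]

lemma Efun_update (α : ℝ) (S' : Finset Link) (c' : Link → ℕ) (G : Finset Link) {t : ℕ}
    (hlen : ∀ a ∈ G, ∀ b ∈ G, len a = len b)
    (π₀ : {x // x ∈ G} → Fin t) (x₀ : {x // x ∈ G}) (k : Fin t) :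
    Efun α S' c' G (Function.update π₀ x₀ k)
      = Efun α S' c' G π₀
        + ((bfun α S' c' ↑x₀ ↑k + Afun α G π₀ x₀ ↑k)
            - (bfun α S' c' ↑x₀ ↑(π₀ x₀) + Afun α G π₀ x₀ ↑(π₀ x₀))) := by
  have hx₀ : x₀ ∈ G.attach := G.mem_attach x₀
  unfold Efun
  set π' := Function.update π₀ x₀ k with hπ'
  have e1 : ∑ x ∈ G.attach, bfun α S' c' ↑x ↑(π' x)
      = ∑ x ∈ G.attach, bfun α S' c' ↑x ↑(π₀ x)
        + (bfun α S' c' ↑x₀ ↑k - bfun α S' c' ↑x₀ ↑(π₀ x₀)) := by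
    rw [← Finset.add_sum_erase _ (fun x : {x // x ∈ G} => bfun α S' c' ↑x ↑(π' x)) hx₀,
        ← Finset.add_sum_erase _ (fun x : {x // x ∈ G} => bfun α S' c' ↑x ↑(π₀ x)) hx₀]
    have h1 : ∀ x ∈ G.attach.erase x₀,
        bfun α S' c' ↑x ↑(π' x) = bfun α S' c' ↑x ↑(π₀ x) := by
      intro x hx
      rw [hπ', Function.update_of_ne (Finset.ne_of_mem_erase hx)]
    rw [Finset.sum_congr rfl h1, hπ', Function.update_self]
    ring
  have e2 : ∑ x ∈ G.attach, Afun α G π' x ↑(π' x)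
      = ∑ x ∈ G.attach, Afun α G π₀ x ↑(π₀ x)
        + 2 * (Afun α G π₀ x₀ ↑k - Afun α G π₀ x₀ ↑(π₀ x₀)) := by
    rw [← Finset.add_sum_erase _ (fun x : {x // x ∈ G} => Afun α G π' x ↑(π' x)) hx₀,
        ← Finset.add_sum_erase _ (fun x : {x // x ∈ G} => Afun α G π₀ x ↑(π₀ x)) hx₀]
    have hrow : Afun α G π' x₀ ↑(π' x₀) = Afun α G π₀ x₀ ↑k := by
      rw [hπ', Function.update_self]
      exact Afun_congr α G _ π₀ x₀ ↑k (fun y hy => Function.update_of_ne hy _ _)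
    have hrest : ∑ x ∈ G.attach.erase x₀, Afun α G π' x ↑(π' x)
        = ∑ x ∈ G.attach.erase x₀, Afun α G π₀ x ↑(π₀ x)
          + (Afun α G π₀ x₀ ↑k - Afun α G π₀ x₀ ↑(π₀ x₀)) := by
      have h2 : ∀ x ∈ G.attach.erase x₀,
          Afun α G π' x ↑(π' x)
            = Afun α G π₀ x ↑(π₀ x)
              + ((if (k : ℕ) = ↑(π₀ x) then trm α ↑x ↑x₀ else 0)
                  - (if ((π₀ x₀ : Fin t) : ℕ) = ↑(π₀ x) then trm α ↑x ↑x₀ else 0)) := by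
        intro x hx
        have hxne := Finset.ne_of_mem_erase hx
        rw [hπ', Function.update_of_ne hxne]
        exact Afun_update α G π₀ x₀ x hxne k ↑(π₀ x)
      rw [Finset.sum_congr rfl h2, Finset.sum_add_distrib, Finset.sum_sub_distrib,
        Afun_erase α G hlen π₀ x₀ ↑k, Afun_erase α G hlen π₀ x₀ ↑(π₀ x₀)]
    rw [hrow, hrest]
    ring
  rw [e1, e2]
  ring

lemma aux (α K : ℝ) (hK : 0 ≤ K) :
    ∀ n (S : Finset Link), S.card ≤ n →
      (∀ i ∈ S, ∑ j ∈ S.filter (fun j => j ≠ i ∧ len i ≤ len j), trm α i j ≤ K) →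
      ∃ c : Link → ℕ, (∀ i ∈ S, c i < ⌊K⌋₊ + 1) ∧
        ∀ i ∈ S, ∑ j ∈ S.filter (fun j => c j = c i ∧ j ≠ i ∧ len i ≤ len j), trm α i j < 1 := by
  intro n
  induction n with
  | zero =>
      intro S hcard _
      obtain rfl : S = ∅ := Finset.card_eq_zero.mp (Nat.le_zero.mp hcard)
      exact ⟨fun _ => 0, by simp, by simp⟩
  | succ n ih =>
      intro S hcard h
      rcases S.eq_empty_or_nonempty with rfl | hS
      · exact ⟨fun _ => 0, by simp, by simp⟩
      obtain ⟨i₀, hi₀S, hi₀⟩ := S.exists_mem_eq_inf' hS len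
      set m := S.inf' hS len with hm
      set G : Finset Link := S.filter (fun i => len i ≤ m) with hGdef
      set S' : Finset Link := S.filter (fun i => ¬ len i ≤ m) with hS'def
      have hGsub : G ⊆ S := Finset.filter_subset _ _
      have hS'sub : S' ⊆ S := Finset.filter_subset _ _
      have hmle : ∀ j ∈ S, m ≤ len j := fun j hj => Finset.inf'_le _ hj
      have hGmem : ∀ j, j ∈ G ↔ j ∈ S ∧ len j ≤ m := fun j => Finset.mem_filter
      have hS'mem : ∀ j, j ∈ S' ↔ j ∈ S ∧ ¬ len j ≤ m := fun j => Finset.mem_filter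
      have hGlen : ∀ j ∈ G, len j = m := fun j hj =>
        le_antisymm ((hGmem j).mp hj).2 (hmle j (hGsub hj))
      have hGlen2 : ∀ a ∈ G, ∀ b ∈ G, len a = len b := fun a ha b hb => by
        rw [hGlen a ha, hGlen b hb]
      have hS'len : ∀ j ∈ S', m < len j := fun j hj => lt_of_not_ge ((hS'mem j).mp hj).2
      have hi₀G : i₀ ∈ G := (hGmem i₀).mpr ⟨hi₀S, le_of_eq hi₀.symm⟩
      have hi₀S' : i₀ ∉ S' := fun hmem => ((hS'mem i₀).mp hmem).2 (le_of_eq hi₀.symm)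
      have hcard' : S'.card ≤ n := by
        have : S'.card < S.card :=
          Finset.card_lt_card ⟨hS'sub, fun hsub => hi₀S' (hsub hi₀S)⟩
        omega
      have hS'h : ∀ i ∈ S', ∑ j ∈ S'.filter (fun j => j ≠ i ∧ len i ≤ len j), trm α i j ≤ K := by
        intro i hi
        refine le_trans (Finset.sum_le_sum_of_subset_of_nonneg
          (Finset.filter_subset_filter _ hS'sub) (fun j _ _ => trm_nonneg α i j)) (h i (hS'sub hi))
      obtain ⟨c', hc'lt, hc'sum⟩ := ih S' hcard' hS'h
      set t := ⌊K⌋₊ + 1 with htdef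
      have htpos : 0 < t := Nat.succ_pos _
      haveI : Nonempty (Fin t) := ⟨⟨0, htpos⟩⟩
      obtain ⟨π₀, -, hπ₀⟩ := Finset.exists_min_image
        (Finset.univ : Finset ({x // x ∈ G} → Fin t)) (Efun α S' c' G) Finset.univ_nonempty
      -- the key local bound from minimality
      have hkey : ∀ x₀ : {x // x ∈ G},
          bfun α S' c' ↑x₀ ↑(π₀ x₀) + Afun α G π₀ x₀ ↑(π₀ x₀) < 1 := by
        intro x₀
        have hmin : ∀ k : Fin t,
            bfun α S' c' ↑x₀ ↑(π₀ x₀) + Afun α G π₀ x₀ ↑(π₀ x₀)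
              ≤ bfun α S' c' ↑x₀ ↑k + Afun α G π₀ x₀ ↑k := by
          intro k
          have h1 := hπ₀ (Function.update π₀ x₀ k) (Finset.mem_univ _)
          rw [Efun_update α S' c' G hGlen2 π₀ x₀ k] at h1
          linarith
        have hsum1 : ∑ k ∈ Finset.range t, bfun α S' c' ↑x₀ k = ∑ j ∈ S', trm α ↑x₀ j := by
          unfold bfun
          exact Finset.sum_fiberwise_of_maps_to
            (fun j hj => Finset.mem_range.mpr (hc'lt j hj)) _
        have hsum2 : ∑ k ∈ Finset.range t, Afun α G π₀ x₀ k
            = ∑ j ∈ G.erase ↑x₀, trm α ↑x₀ j := by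
          unfold Afun
          rw [Finset.sum_comm]
          have hinner : ∀ y ∈ G.attach,
              (∑ k ∈ Finset.range t, if y ≠ x₀ ∧ (π₀ y : ℕ) = k then trm α ↑x₀ ↑y else 0)
                = if (↑y : Link) ≠ ↑x₀ then trm α ↑x₀ ↑y else 0 := by
            intro y _
            by_cases hy : y = x₀
            · subst hy; simp
            · have h2 : (↑y : Link) ≠ ↑x₀ := fun hc => hy (Subtype.ext hc)
              rw [if_pos h2]
              have h3 : (fun k => if y ≠ x₀ ∧ (π₀ y : ℕ) = k then trm α ↑x₀ ↑y else 0)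
                  = fun k => if (π₀ y : ℕ) = k then trm α ↑x₀ ↑y else 0 :=
                funext fun k => by rw [if_congr (and_iff_right hy) rfl rfl]
              rw [h3, Finset.sum_ite_eq (Finset.range t) ((π₀ y : ℕ)) (fun _ => trm α ↑x₀ ↑y),
                if_pos (Finset.mem_range.mpr (π₀ y).isLt)]
          rw [Finset.sum_congr rfl hinner,
            Finset.sum_attach G (fun j => if j ≠ ↑x₀ then trm α ↑x₀ j else 0),
            ← Finset.sum_filter, Finset.filter_ne']
        have hdisj : Disjoint S' (G.erase ↑x₀) := by
          refine Finset.disjoint_left.mpr fun j hj1 hj2 => ?_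
          exact ((hS'mem j).mp hj1).2 ((hGmem j).mp (Finset.mem_of_mem_erase hj2)).2
        have hx₀len : len (↑x₀ : Link) = m := hGlen _ x₀.2
        have hset : S' ∪ G.erase ↑x₀
            = S.filter (fun j => j ≠ ↑x₀ ∧ len (↑x₀ : Link) ≤ len j) := by
          ext j
          simp only [Finset.mem_union, Finset.mem_erase, Finset.mem_filter, hS'mem, hGmem]
          constructor
          · rintro (⟨hjS, hjm⟩ | ⟨hjne, hjS, hjm⟩)
            · refine ⟨hjS, fun he => hjm (he ▸ le_of_eq hx₀len), ?_⟩
              rw [hx₀len]; exact le_of_lt (lt_of_not_ge hjm)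
            · exact ⟨hjS, hjne, by rw [hx₀len]; exact hmle j hjS⟩
          · rintro ⟨hjS, hjne, hjlen⟩
            by_cases hjm : len j ≤ m
            · exact Or.inr ⟨hjne, hjS, hjm⟩
            · exact Or.inl ⟨hjS, hjm⟩
        have hbound : ∑ j ∈ S', trm α ↑x₀ j + ∑ j ∈ G.erase ↑x₀, trm α ↑x₀ j ≤ K := by
          rw [← Finset.sum_union hdisj, hset]
          exact h ↑x₀ (hGsub x₀.2)
        have hLsum : (t : ℝ) * (bfun α S' c' ↑x₀ ↑(π₀ x₀) + Afun α G π₀ x₀ ↑(π₀ x₀)) ≤ K := by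
          have h4 := Finset.card_nsmul_le_sum (Finset.range t)
            (fun k => bfun α S' c' ↑x₀ k + Afun α G π₀ x₀ k)
            (bfun α S' c' ↑x₀ ↑(π₀ x₀) + Afun α G π₀ x₀ ↑(π₀ x₀))
            (fun k hk => hmin ⟨k, Finset.mem_range.mp hk⟩)
          rw [Finset.card_range, nsmul_eq_mul] at h4
          rw [Finset.sum_add_distrib, hsum1, hsum2] at h4
          linarith
        have hKt : K < (t : ℝ) := by
          rw [htdef]; push_cast; exact Nat.lt_floor_add_one K
        have htR : (0 : ℝ) < (t : ℝ) := by exact_mod_cast htpos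
        nlinarith
      -- assemble the coloring
      have hnotG : ∀ j ∈ S', j ∉ G := fun j hj hjG =>
        ((hS'mem j).mp hj).2 ((hGmem j).mp hjG).2
      set c : Link → ℕ := fun i => if h : i ∈ G then ((π₀ ⟨i, h⟩ : Fin t) : ℕ) else c' i
        with hcdef
      have hcG : ∀ (j) (hj : j ∈ G), c j = ↑(π₀ ⟨j, hj⟩) := fun j hj => dif_pos hj
      have hcS' : ∀ j ∈ S', c j = c' j := fun j hj => dif_neg (hnotG j hj)
      refine ⟨c, ?_, ?_⟩
      · intro i hi
        by_cases hiG : i ∈ G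
        · rw [hcG i hiG]; exact (π₀ ⟨i, hiG⟩).isLt
        · have hiS' : i ∈ S' := (hS'mem i).mpr ⟨hi, fun hle => hiG ((hGmem i).mpr ⟨hi, hle⟩)⟩
          rw [hcS' i hiS']
          exact hc'lt i hiS'
      · intro i hi
        by_cases hiG : i ∈ G
        · set x₀ : {x // x ∈ G} := ⟨i, hiG⟩ with hx₀def
          have hci : c i = ↑(π₀ x₀) := hcG i hiG
          have hilen : len i = m := hGlen i hiG
          have hdisj2 : Disjoint (S'.filter (fun j => c' j = ((π₀ x₀ : Fin t) : ℕ)))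
              (G.filter (fun j => j ≠ i ∧ c j = ((π₀ x₀ : Fin t) : ℕ))) :=
            Finset.disjoint_left.mpr fun j hj1 hj2 =>
              hnotG j (Finset.mem_of_mem_filter j hj1) (Finset.mem_of_mem_filter j hj2)
          have hsplit : S.filter (fun j => c j = c i ∧ j ≠ i ∧ len i ≤ len j)
              = S'.filter (fun j => c' j = ((π₀ x₀ : Fin t) : ℕ))
                ∪ G.filter (fun j => j ≠ i ∧ c j = ((π₀ x₀ : Fin t) : ℕ)) := by
            ext j
            simp only [Finset.mem_union, Finset.mem_filter, hci]
            constructor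
            · rintro ⟨hjS, hcj, hjne, hjlen⟩
              by_cases hjG : j ∈ G
              · exact Or.inr ⟨hjG, hjne, hcj⟩
              · have hjS' : j ∈ S' := (hS'mem j).mpr
                  ⟨hjS, fun hle => hjG ((hGmem j).mpr ⟨hjS, hle⟩)⟩
                exact Or.inl ⟨hjS', by rw [← hcS' j hjS']; exact hcj⟩
            · rintro (⟨hjS', hcj⟩ | ⟨hjG, hjne, hcj⟩)
              · have hjm := hS'len j hjS'
                refine ⟨hS'sub hjS', (hcS' j hjS').trans hcj, ?_, ?_⟩
                · intro he; rw [he] at hjm; rw [hilen] at hjm; exact lt_irrefl m hjm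
                · rw [hilen]; exact le_of_lt hjm
              · exact ⟨hGsub hjG, hcj, hjne, by rw [hilen, hGlen j hjG]⟩
          have hb : ∑ j ∈ S'.filter (fun j => c' j = ((π₀ x₀ : Fin t) : ℕ)), trm α i j
              = bfun α S' c' i ((π₀ x₀ : Fin t) : ℕ) := rfl
          have hA : ∑ j ∈ G.filter (fun j => j ≠ i ∧ c j = ((π₀ x₀ : Fin t) : ℕ)), trm α i j
              = Afun α G π₀ x₀ ((π₀ x₀ : Fin t) : ℕ) := by
            rw [Finset.sum_filter,
              ← Finset.sum_attach G
                (fun j => if j ≠ i ∧ c j = ((π₀ x₀ : Fin t) : ℕ) then trm α i j else 0)]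
            refine Finset.sum_congr rfl fun y _ => ?_
            have hcy : c ↑y = ((π₀ y : Fin t) : ℕ) := hcG ↑y y.2
            refine if_congr ?_ rfl rfl
            constructor
            · rintro ⟨h1, h2⟩
              exact ⟨fun he => h1 (congrArg Subtype.val he), hcy.symm.trans h2⟩
            · rintro ⟨h1, h2⟩
              exact ⟨fun he => h1 (Subtype.ext he), hcy.trans h2⟩
          rw [hsplit, Finset.sum_union hdisj2, hb, hA]
          exact hkey x₀
        · have hiS' : i ∈ S' := (hS'mem i).mpr ⟨hi, fun hle => hiG ((hGmem i).mpr ⟨hi, hle⟩)⟩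
          have hci : c i = c' i := hcS' i hiS'
          have hmlt : m < len i := hS'len i hiS'
          have hsplit2 : S.filter (fun j => c j = c i ∧ j ≠ i ∧ len i ≤ len j)
              = S'.filter (fun j => c' j = c' i ∧ j ≠ i ∧ len i ≤ len j) := by
            ext j
            rw [Finset.mem_filter, Finset.mem_filter, hci]
            constructor
            · rintro ⟨hjS, hcj, hjne, hjlen⟩
              have hjG : j ∉ G := fun hjG => by
                have hjm := hGlen j hjG
                rw [hjm] at hjlen
                exact absurd hjlen (not_le.mpr hmlt)
              have hjS' : j ∈ S' := (hS'mem j).mpr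
                ⟨hjS, fun hle => hjG ((hGmem j).mpr ⟨hjS, hle⟩)⟩
              exact ⟨hjS', by rw [← hcS' j hjS']; exact hcj, hjne, hjlen⟩
            · rintro ⟨hjS', hcj, hjne, hjlen⟩
              exact ⟨hS'sub hjS', by rw [hcS' j hjS']; exact hcj, hjne, hjlen⟩
          rw [hsplit2]
          exact hc'sum i hiS'

end IRef

/-- If for every link of `S` the capped interference from not-shorter links
in `S` is at most `K`, then `S` can be partitioned into at most `⌊K⌋ + 1` subsets such that
within each subset this interference is below `1`. -/
theorem interference_refinement (α K : ℝ) (hα : 0 < α) (hK : 0 ≤ K) (S : Finset Link)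
    (hlinks : ∀ i ∈ S, i.1 ≠ i.2)
    (h : ∀ i ∈ S,
      ∑ j ∈ S.filter (fun j => j ≠ i ∧ len i ≤ len j), min 1 (len i ^ α / dd i j ^ α) ≤ K) :
    ∃ c : Link → ℕ, (∀ i ∈ S, c i < ⌊K⌋₊ + 1) ∧
      ∀ k : ℕ, ∀ i ∈ S.filter (fun j => c j = k),
        ∑ j ∈ (S.filter (fun j => c j = k)).filter (fun j => j ≠ i ∧ len i ≤ len j),
          min 1 (len i ^ α / dd i j ^ α) < 1 := by
  obtain ⟨c, hc1, hc2⟩ := IRef.aux α K hK S.card S le_rfl h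
  refine ⟨c, hc1, ?_⟩
  intro k i hi
  rw [Finset.mem_filter] at hi
  rw [Finset.filter_filter]
  have hpe : ∀ j ∈ S, ((c j = k ∧ j ≠ i ∧ len i ≤ len j) ↔
      (c j = c i ∧ j ≠ i ∧ len i ≤ len j)) := fun j _ => by rw [hi.2]
  rw [Finset.filter_congr hpe]
  exact hc2 i hi.1
end
end

section
/- There is a constant C depending only on α > 2 such that: for every finite set R of at least two points in the Euclidean plane ℝ² and every set S of links obtained by arbitrarily orienting the edges of a minimum spanning tree of R, every link i ∈ S satisfies Σ_{j ∈ S, j ≠ i, l_j ≥ l_i} min{1, l_i^α / d(i,j)^α} ≤ C. -/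
noncomputable section

open scoped BigOperators

section MSTProof

open Finset SimpleGraph Metric MeasureTheory
open scoped ENNReal NNReal

/-- A connected graph on a finite vertex type has at least `card V - 1` edges. -/
lemma conn_card_le {V : Type*} [Fintype V] [DecidableEq V] (G : SimpleGraph V)
    [Fintype G.edgeSet] (h : G.Connected) : Fintype.card V ≤ G.edgeFinset.card + 1 := by
  classical
  obtain ⟨root⟩ := h.nonempty
  have key : ∀ u : V, ∃ v : V, u ≠ root → G.Adj u v ∧ G.dist v root < G.dist u root := by
    intro u
    by_cases hu : u = root
    · exact ⟨root, fun h' => absurd hu h'⟩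
    · obtain ⟨p, hp⟩ := (h.preconnected u root).exists_walk_length_eq_dist
      cases p with
      | nil => exact absurd rfl hu
      | cons hadj q =>
        refine ⟨_, fun _ => ⟨hadj, ?_⟩⟩
        have h1 : G.dist _ root ≤ q.length := SimpleGraph.dist_le q
        rw [SimpleGraph.Walk.length_cons] at hp
        have h2 : 0 < G.dist u root := h.pos_dist_of_ne hu
        omega
  choose nxt hnxt using key
  have hcard : (Finset.univ.erase root).card ≤ G.edgeFinset.card := by
    apply Finset.card_le_card_of_injOn (fun u => s(u, nxt u))
    · intro u hu
      have hu' : u ≠ root := (Finset.mem_erase.mp hu).1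
      exact SimpleGraph.mem_edgeFinset.mpr ((SimpleGraph.mem_edgeSet G).mpr ((hnxt u hu').1))
    · intro u hu u' hu' heq
      rw [Finset.coe_erase, Set.mem_diff] at hu hu'
      have h1 := hnxt u (by simpa using hu.2)
      have h2 := hnxt u' (by simpa using hu'.2)
      rcases Sym2.eq_iff.mp heq with ⟨hl, _⟩ | ⟨hl, hr⟩
      · exact hl
      · exfalso
        have e1 : G.dist u root < G.dist u' root := by rw [hl]; exact h2.2
        have e2 : G.dist u' root < G.dist u root := by rw [← hr]; exact h1.2
        omega
  have h3 : Fintype.card V = Finset.univ.card := (Finset.card_univ).symm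
  have h4 : (Finset.univ.erase root).card = Finset.univ.card - 1 :=
    Finset.card_erase_of_mem (Finset.mem_univ root)
  have h5 : 0 < Finset.univ.card := Finset.card_pos.mpr ⟨root, Finset.mem_univ root⟩
  omega

def grph (R : Finset Pt) (T : Finset Link) : SimpleGraph {p : Pt // p ∈ R} :=
  SimpleGraph.fromRel fun x y => ((x : Pt), (y : Pt)) ∈ T

lemma grph_adj {R : Finset Pt} {T : Finset Link} (x y : {p : Pt // p ∈ R}) :
    (grph R T).Adj x y ↔ x ≠ y ∧ (((x : Pt), (y : Pt)) ∈ T ∨ ((y : Pt), (x : Pt)) ∈ T) :=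
  SimpleGraph.fromRel_adj _ x y

lemma grph_mono {R : Finset Pt} {T T' : Finset Link} (h : T ⊆ T') : grph R T ≤ grph R T' := by
  intro a b hab
  rw [grph_adj] at hab ⊢
  exact ⟨hab.1, hab.2.imp (fun h' => h h') (fun h' => h h')⟩

lemma reach_dichotomy {R : Finset Pt} {S : Finset Link}
    (hconn : (grph R S).Connected) {g : Link}
    (x y : {p : Pt // p ∈ R}) (hxy : ((x : Pt), (y : Pt)) = g ∨ ((y : Pt), (x : Pt)) = g)
    (t : {p : Pt // p ∈ R}) :
    (grph R (S.erase g)).Reachable x t ∨ (grph R (S.erase g)).Reachable y t := by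
  have h := hconn.preconnected x t
  rw [SimpleGraph.reachable_iff_reflTransGen] at h
  induction h with
  | refl => exact Or.inl (SimpleGraph.Reachable.refl x)
  | @tail b c hb hadj ih =>
    rw [grph_adj] at hadj
    obtain ⟨hbc, hmem⟩ := hadj
    by_cases h1 : ((b : Pt), (c : Pt)) = g ∨ ((c : Pt), (b : Pt)) = g
    · -- c is x or y
      have hcxy : c = x ∨ c = y := by
        rcases h1 with h1 | h1 <;> rcases hxy with h2 | h2 <;>
          [skip; skip; skip; skip] <;>
        · rw [← h2] at h1
          rcases Prod.mk.injEq .. ▸ h1 with ⟨ha, hb'⟩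
          first
            | exact Or.inr (Subtype.ext (by assumption))
            | exact Or.inl (Subtype.ext (by assumption))
      rcases hcxy with rfl | rfl
      · exact Or.inl (SimpleGraph.Reachable.refl _)
      · exact Or.inr (SimpleGraph.Reachable.refl _)
    · push_neg at h1
      have hadj' : (grph R (S.erase g)).Adj b c := by
        rw [grph_adj]
        refine ⟨hbc, hmem.imp (fun h' => Finset.mem_erase.mpr ⟨h1.1, h'⟩)
          (fun h' => Finset.mem_erase.mpr ⟨h1.2, h'⟩)⟩
      exact ih.imp (fun h' => h'.trans hadj'.reachable) (fun h' => h'.trans hadj'.reachable)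

lemma not_conn_erase {R : Finset Pt} {S : Finset Link} (hST : IsSpanningTreeLinks R S)
    {g : Link} (hg : g ∈ S) : ¬ (grph R (S.erase g)).Connected := by
  intro hc
  obtain ⟨hend, hcard, _⟩ := hST
  haveI : Fintype (grph R (S.erase g)).edgeSet := Fintype.ofFinite _
  have h1 := conn_card_le _ hc
  obtain ⟨x0⟩ := hc.nonempty
  have h2 : (grph R (S.erase g)).edgeFinset.card ≤ (S.erase g).card := by
    apply Finset.card_le_card_of_surjOn
      (fun i : Link => if h : i.1 ∈ R ∧ i.2 ∈ R then
        s(⟨i.1, h.1⟩, (⟨i.2, h.2⟩ : {p : Pt // p ∈ R})) else s(x0, x0))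
    intro e he
    rw [Finset.mem_coe, SimpleGraph.mem_edgeFinset] at he
    induction e with
    | _ a b =>
      rw [SimpleGraph.mem_edgeSet, grph_adj] at he
      obtain ⟨hab, hmem | hmem⟩ := he
      · refine ⟨((a : Pt), (b : Pt)), hmem, ?_⟩
        have hR : (a : Pt) ∈ R ∧ (b : Pt) ∈ R := ⟨a.2, b.2⟩
        simp only [dif_pos hR]
      · refine ⟨((b : Pt), (a : Pt)), hmem, ?_⟩
        have hR : (b : Pt) ∈ R ∧ (a : Pt) ∈ R := ⟨b.2, a.2⟩
        simp only [dif_pos hR]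
        exact Sym2.eq_swap
  have h3 : Fintype.card {p : Pt // p ∈ R} = R.card := Fintype.card_coe R
  have h4 : (S.erase g).card = S.card - 1 := Finset.card_erase_of_mem hg
  have h5 : 1 ≤ S.card := Finset.card_pos.mpr ⟨g, hg⟩
  omega


lemma mst_swap {R : Finset Pt} {S : Finset Link} (hMST : IsMSTLinks R S) {g : Link} (hg : g ∈ S)
    (x y w : Pt) (hor : g = (x, y) ∨ g = (y, x)) (hwy : w ≠ y)
    (hxR : x ∈ R) (hyR : y ∈ R) (hwR : w ∈ R)
    (hreach : (grph R (S.erase g)).Reachable ⟨x, hxR⟩ ⟨w, hwR⟩) :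
    dist x y ≤ dist w y := by
  obtain ⟨hST, hmin⟩ := hMST
  obtain ⟨hend, hcard, hconn⟩ := hST
  have hxy : (((⟨x, hxR⟩ : {p : Pt // p ∈ R}) : Pt), ((⟨y, hyR⟩ : {p : Pt // p ∈ R}) : Pt)) = g ∨
      (((⟨y, hyR⟩ : {p : Pt // p ∈ R}) : Pt), ((⟨x, hxR⟩ : {p : Pt // p ∈ R}) : Pt)) = g := by
    rcases hor with h | h
    · exact Or.inl h.symm
    · exact Or.inr h.symm
  have hdich := reach_dichotomy (S := S) hconn ⟨x, hxR⟩ ⟨y, hyR⟩ hxy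
  -- (w, y) ∉ S.erase g
  have hnotmem : (w, y) ∉ S.erase g := by
    intro hmem
    apply not_conn_erase ⟨hend, hcard, hconn⟩ hg
    have hyx : (grph R (S.erase g)).Reachable ⟨x, hxR⟩ ⟨y, hyR⟩ := by
      refine hreach.trans (SimpleGraph.Adj.reachable ?_)
      rw [grph_adj]
      exact ⟨fun hc => hwy (by simpa using congrArg Subtype.val hc), Or.inl hmem⟩
    rw [SimpleGraph.connected_iff]
    refine ⟨fun t t' => ?_, ⟨⟨x, hxR⟩⟩⟩
    have h1 := (hdich t).elim id (fun h' => hyx.trans h')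
    have h2 := (hdich t').elim id (fun h' => hyx.trans h')
    exact h1.symm.trans h2
  set S' := insert (w, y) (S.erase g) with hS'
  have hST' : IsSpanningTreeLinks R S' := by
    refine ⟨?_, ?_, ?_⟩
    · intro i hi
      rcases Finset.mem_insert.mp hi with rfl | hi'
      · exact ⟨hwR, hyR, hwy⟩
      · exact hend i (Finset.mem_of_mem_erase hi')
    · rw [Finset.card_insert_of_notMem hnotmem, Finset.card_erase_of_mem hg]
      have h5 : 1 ≤ S.card := Finset.card_pos.mpr ⟨g, hg⟩
      omega
    · have hsub : S.erase g ⊆ S' := Finset.subset_insert _ _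
      have hmono := grph_mono (R := R) hsub
      have hxw : (grph R S').Reachable ⟨x, hxR⟩ ⟨w, hwR⟩ := hreach.mono hmono
      have hxy' : (grph R S').Reachable ⟨x, hxR⟩ ⟨y, hyR⟩ := by
        refine hxw.trans (SimpleGraph.Adj.reachable ?_)
        rw [grph_adj]
        exact ⟨fun hc => hwy (by simpa using congrArg Subtype.val hc),
          Or.inl (Finset.mem_insert_self _ _)⟩
      rw [SimpleGraph.connected_iff]
      refine ⟨fun t t' => ?_, ⟨⟨x, hxR⟩⟩⟩
      have h1 := (hdich t).elim (fun h' => h'.mono hmono) (fun h' => hxy'.trans (h'.mono hmono))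
      have h2 := (hdich t').elim (fun h' => h'.mono hmono) (fun h' => hxy'.trans (h'.mono hmono))
      exact h1.symm.trans h2
  have hle := hmin S' hST'
  have hsum : ∑ i ∈ S', len i = len (w, y) + ∑ i ∈ S.erase g, len i := Finset.sum_insert hnotmem
  have hsum2 : (∑ i ∈ S.erase g, len i) + len g = ∑ i ∈ S, len i := Finset.sum_erase_add _ _ hg
  have hlg : len g = dist x y := by
    rcases hor with h | h
    · rw [h]; rfl
    · rw [h]; exact dist_comm y x
  have hlwy : len (w, y) = dist w y := rfl
  linarith

open scoped RealInnerProductSpace in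
lemma mst_angle_aux {R : Finset Pt} {S : Finset Link} (hMST : IsMSTLinks R S)
    {f g : Link} (hf : f ∈ S) (hg : g ∈ S) (z c c' : Pt)
    (hforz : f = (z, c) ∨ f = (c, z)) (hgorz : g = (z, c') ∨ g = (c', z))
    (hcc' : c ≠ c') (hfg : f ≠ g) (hle : dist z c ≤ dist z c') :
    2 * ⟪c - z, c' - z⟫ ≤ dist z c * dist z c' := by
  have hend := hMST.1.1
  have hzR : z ∈ R := by
    rcases hforz with h | h <;> [exact (h ▸ hend f hf).1; exact (h ▸ hend f hf).2.1]
  have hcR : c ∈ R := by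
    rcases hforz with h | h <;> [exact (h ▸ hend f hf).2.1; exact (h ▸ hend f hf).1]
  have hc'R : c' ∈ R := by
    rcases hgorz with h | h <;> [exact (h ▸ hend g hg).2.1; exact (h ▸ hend g hg).1]
  have hzc : z ≠ c := by
    rcases hforz with h | h
    · exact (h ▸ hend f hf).2.2
    · exact ((h ▸ hend f hf).2.2).symm
  -- c is reachable from z in the graph with g removed
  have hreach : (grph R (S.erase g)).Reachable ⟨z, hzR⟩ ⟨c, hcR⟩ := by
    apply SimpleGraph.Adj.reachable
    rw [grph_adj]
    refine ⟨fun hc => hzc (by simpa using congrArg Subtype.val hc), ?_⟩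
    have hfmem : f ∈ S.erase g := Finset.mem_erase.mpr ⟨hfg, hf⟩
    rcases hforz with h | h
    · exact Or.inl (h ▸ hfmem)
    · exact Or.inr (h ▸ hfmem)
  have hswap : dist z c' ≤ dist c c' :=
    mst_swap hMST hg z c' c hgorz hcc' hzR hc'R hcR hreach
  have hexp : ‖(c - z) - (c' - z)‖ ^ 2
      = ‖c - z‖ ^ 2 - 2 * ⟪c - z, c' - z⟫ + ‖c' - z‖ ^ 2 := norm_sub_sq_real _ _
  have he1 : dist z c = ‖c - z‖ := by rw [_root_.dist_comm, dist_eq_norm]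
  have he2 : dist z c' = ‖c' - z‖ := by rw [_root_.dist_comm, dist_eq_norm]
  have he3 : dist c c' = ‖(c - z) - (c' - z)‖ := by
    rw [dist_eq_norm]; congr 1; abel
  have hnn : 0 ≤ dist z c := dist_nonneg
  have hnn' : 0 ≤ dist z c' := dist_nonneg
  nlinarith [hswap, hle, hexp, he1, he2, he3, hnn, hnn', sq_nonneg (dist c c')]

open scoped RealInnerProductSpace in
lemma mst_angle {R : Finset Pt} {S : Finset Link} (hMST : IsMSTLinks R S)
    {f g : Link} (hf : f ∈ S) (hg : g ∈ S) (z c c' : Pt)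
    (hforz : f = (z, c) ∨ f = (c, z)) (hgorz : g = (z, c') ∨ g = (c', z))
    (hcc' : c ≠ c') (hfg : f ≠ g) :
    2 * ⟪c - z, c' - z⟫ ≤ dist z c * dist z c' := by
  rcases le_total (dist z c) (dist z c') with h | h
  · exact mst_angle_aux hMST hf hg z c c' hforz hgorz hcc' hfg h
  · have := mst_angle_aux hMST hg hf z c' c hgorz hforz (Ne.symm hcc') (Ne.symm hfg) h
    rw [real_inner_comm] at this
    linarith [this, mul_comm (dist z c') (dist z c)]

lemma mst_cut {R : Finset Pt} {S : Finset Link} (hMST : IsMSTLinks R S)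
    {f g : Link} (hf : f ∈ S) (hg : g ∈ S) (a b a' b' : Pt)
    (hfor : f = (a, b) ∨ f = (b, a)) (hgor : g = (a', b') ∨ g = (b', a'))
    (h1 : a' ≠ a) (h2 : a' ≠ b) (h3 : b' ≠ a) (h4 : b' ≠ b) (hfg : f ≠ g) :
    (dist a b ≤ dist a' b ∧ dist a b ≤ dist b' b) ∨
    (dist a b ≤ dist a' a ∧ dist a b ≤ dist b' a) := by
  have hend := hMST.1.1
  have hconn : (grph R S).Connected := hMST.1.2.2
  have haR : a ∈ R := by
    rcases hfor with h | h <;> [exact (h ▸ hend f hf).1; exact (h ▸ hend f hf).2.1]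
  have hbR : b ∈ R := by
    rcases hfor with h | h <;> [exact (h ▸ hend f hf).2.1; exact (h ▸ hend f hf).1]
  have ha'R : a' ∈ R := by
    rcases hgor with h | h <;> [exact (h ▸ hend g hg).1; exact (h ▸ hend g hg).2.1]
  have hb'R : b' ∈ R := by
    rcases hgor with h | h <;> [exact (h ▸ hend g hg).2.1; exact (h ▸ hend g hg).1]
  have ha'b' : a' ≠ b' := by
    rcases hgor with h | h
    · exact (h ▸ hend g hg).2.2
    · exact ((h ▸ hend g hg).2.2).symm
  have hxy : (((⟨a, haR⟩ : {p : Pt // p ∈ R}) : Pt), ((⟨b, hbR⟩ : {p : Pt // p ∈ R}) : Pt)) = f ∨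
      (((⟨b, hbR⟩ : {p : Pt // p ∈ R}) : Pt), ((⟨a, haR⟩ : {p : Pt // p ∈ R}) : Pt)) = f := by
    rcases hfor with h | h
    · exact Or.inl h.symm
    · exact Or.inr h.symm
  have hadj : (grph R (S.erase f)).Adj ⟨a', ha'R⟩ ⟨b', hb'R⟩ := by
    rw [grph_adj]
    refine ⟨fun hc => ha'b' (by simpa using congrArg Subtype.val hc), ?_⟩
    have hgmem : g ∈ S.erase f := Finset.mem_erase.mpr ⟨Ne.symm hfg, hg⟩
    rcases hgor with h | h
    · exact Or.inl (h ▸ hgmem)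
    · exact Or.inr (h ▸ hgmem)
  rcases reach_dichotomy hconn ⟨a, haR⟩ ⟨b, hbR⟩ hxy ⟨a', ha'R⟩ with hr | hr
  · left
    constructor
    · exact mst_swap hMST hf a b a' hfor h2 haR hbR ha'R hr
    · exact mst_swap hMST hf a b b' hfor h4 haR hbR hb'R (hr.trans hadj.reachable)
  · right
    have hfor' : f = (b, a) ∨ f = (a, b) := hfor.symm
    constructor
    · have := mst_swap hMST hf b a a' hfor' h1 hbR haR ha'R hr
      rwa [_root_.dist_comm b a] at this
    · have := mst_swap hMST hf b a b' hfor' h3 hbR haR hb'R (hr.trans hadj.reachable)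
      rwa [_root_.dist_comm b a] at this

section Calc
open scoped RealInnerProductSpace

lemma norm_smul_sq (a : ℝ) (w : Pt) (s : ℝ) (hw : ‖w‖ = s) : ‖a • w‖ ^ 2 = a ^ 2 * s ^ 2 := by
  rw [norm_smul, Real.norm_eq_abs, mul_pow, sq_abs, hw]

set_option maxHeartbeats 2000000 in
/-- Case (i,II)/(ii,I): uses `l*s ≤ ‖d - l•w1‖` and `m*s ≤ ‖d‖`. -/
lemma calcA (s : ℝ) (hs : 0 < s) (d w1 w2 : Pt) (l m : ℝ)
    (hl : 2 ≤ l) (hm : 2 ≤ m) (hw1 : ‖w1‖ = s) (hw2 : ‖w2‖ = s)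
    (H1 : l * s ≤ ‖d - l • w1‖) (H2 : m * s ≤ ‖d‖) :
    s / 4 ≤ ‖d + w2 - w1‖ := by
  by_contra hcon
  push_neg at hcon
  set x := ‖d + w2 - w1‖ with hxdef
  have hx0 : 0 ≤ x := norm_nonneg _
  set J := ⟪w1, w2⟫ with hJdef
  have E1 : ‖w1 - w2‖ ^ 2 = 2 * s ^ 2 - 2 * J := by
    rw [norm_sub_sq_real, hw1, hw2]; ring
  have T1 : ‖d‖ ≤ x + ‖w1 - w2‖ := by
    have hid : d = (d + w2 - w1) + (w1 - w2) := by abel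
    calc ‖d‖ = ‖(d + w2 - w1) + (w1 - w2)‖ := by rw [← hid]
    _ ≤ x + ‖w1 - w2‖ := norm_add_le _ _
  have hW : 2 * s - x ≤ ‖w1 - w2‖ := by nlinarith [H2, T1]
  have hJ2 : (2 * s - x) ^ 2 ≤ 2 * s ^ 2 - 2 * J := by
    rw [← E1]
    apply pow_le_pow_left₀ (by nlinarith) hW
  have E2 : ‖(l - 1) • w1 + w2‖ ^ 2 = (l - 1) ^ 2 * s ^ 2 + 2 * (l - 1) * J + s ^ 2 := by
    rw [norm_add_sq_real, norm_smul_sq _ _ _ hw1, real_inner_smul_left, hw2]; ring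
  have T2 : ‖d - l • w1‖ ≤ x + ‖(l - 1) • w1 + w2‖ := by
    have hid : d - l • w1 = (d + w2 - w1) - ((l - 1) • w1 + w2) := by module
    calc ‖d - l • w1‖ = ‖(d + w2 - w1) - ((l - 1) • w1 + w2)‖ := by rw [← hid]
    _ ≤ x + ‖(l - 1) • w1 + w2‖ := norm_sub_le _ _
  have hN : l * s - x ≤ ‖(l - 1) • w1 + w2‖ := by linarith [H1, T2]
  have hJ1 : (l * s - x) ^ 2 ≤ (l - 1) ^ 2 * s ^ 2 + 2 * (l - 1) * J + s ^ 2 := by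
    rw [← E2]
    apply pow_le_pow_left₀ (by nlinarith) hN
  have key : (l - 1) * (2 * s - x) ^ 2 ≤ 2 * l * s * x - x ^ 2 := by
    nlinarith [hJ1, mul_le_mul_of_nonneg_left hJ2 (show (0:ℝ) ≤ l - 1 by linarith)]
  nlinarith [key, mul_nonneg (show (0:ℝ) ≤ l - 2 by linarith)
      (mul_nonneg hs.le (show (0:ℝ) ≤ s - 4 * x by linarith)),
    mul_nonneg (show (0:ℝ) ≤ l - 2 by linarith) (mul_pos hs hs).le,
    mul_pos hs (show (0:ℝ) < s - 4 * x by linarith), mul_pos hs hs, sq_nonneg x,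
    mul_nonneg (show (0:ℝ) ≤ l - 2 by linarith) (sq_nonneg x)]

set_option maxHeartbeats 2000000 in
/-- Case (ii,II): uses `m*s ≤ ‖d‖` and `l*s ≤ ‖d + m•w2‖`. -/
lemma calcB (s : ℝ) (hs : 0 < s) (d w1 w2 : Pt) (l m : ℝ)
    (hl : 2 ≤ l) (hm : 2 ≤ m) (hw1 : ‖w1‖ = s) (hw2 : ‖w2‖ = s)
    (H1 : m * s ≤ ‖d‖) (H2 : l * s ≤ ‖d + m • w2‖) :
    s / 4 ≤ ‖d + w2 - w1‖ := by
  by_contra hcon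
  push_neg at hcon
  set x := ‖d + w2 - w1‖ with hxdef
  have hx0 : 0 ≤ x := norm_nonneg _
  set J := ⟪w1, w2⟫ with hJdef
  have E1 : ‖w1 - w2‖ ^ 2 = 2 * s ^ 2 - 2 * J := by
    rw [norm_sub_sq_real, hw1, hw2]; ring
  have T1 : ‖d‖ ≤ x + ‖w1 - w2‖ := by
    have hid : d = (d + w2 - w1) + (w1 - w2) := by abel
    calc ‖d‖ = ‖(d + w2 - w1) + (w1 - w2)‖ := by rw [← hid]
    _ ≤ x + ‖w1 - w2‖ := norm_add_le _ _
  have hWub : ‖w1 - w2‖ ≤ 2 * s := by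
    calc ‖w1 - w2‖ ≤ ‖w1‖ + ‖w2‖ := norm_sub_le _ _
    _ = 2 * s := by rw [hw1, hw2]; ring
  have hmub : m * s ≤ x + 2 * s := by linarith [H1, T1]
  have hW : m * s - x ≤ ‖w1 - w2‖ := by linarith [H1, T1]
  have hJ2 : (m * s - x) ^ 2 ≤ 2 * s ^ 2 - 2 * J := by
    rw [← E1]
    apply pow_le_pow_left₀ (by nlinarith) hW
  have E3 : ‖w1 + (m - 1) • w2‖ ^ 2 = s ^ 2 + 2 * (m - 1) * J + (m - 1) ^ 2 * s ^ 2 := by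
    rw [norm_add_sq_real, norm_smul_sq _ _ _ hw2, real_inner_smul_right, hw1]; ring
  have T2 : ‖d + m • w2‖ ≤ x + ‖w1 + (m - 1) • w2‖ := by
    have hid : d + m • w2 = (d + w2 - w1) + (w1 + (m - 1) • w2) := by module
    calc ‖d + m • w2‖ = ‖(d + w2 - w1) + (w1 + (m - 1) • w2)‖ := by rw [← hid]
    _ ≤ x + ‖w1 + (m - 1) • w2‖ := norm_add_le _ _
  have hN : l * s - x ≤ ‖w1 + (m - 1) • w2‖ := by linarith [H2, T2]
  have hJ1 : (l * s - x) ^ 2 ≤ s ^ 2 + 2 * (m - 1) * J + (m - 1) ^ 2 * s ^ 2 := by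
    rw [← E3]
    apply pow_le_pow_left₀ (by nlinarith) hN
  have key : (l * s - x) ^ 2 + (m - 1) * (m * s - x) ^ 2 ≤ m ^ 2 * s ^ 2 := by
    nlinarith [hJ1, mul_le_mul_of_nonneg_left hJ2 (show (0:ℝ) ≤ m - 1 by linarith)]
  have k1 : (2 * s - x) ^ 2 ≤ (l * s - x) ^ 2 := by
    apply pow_le_pow_left₀ (by linarith) (by nlinarith)
  have k2 : (2 * s - x) ^ 2 ≤ (m * s - x) ^ 2 := by
    apply pow_le_pow_left₀ (by linarith) (by nlinarith)
  have k3 : m ^ 2 * s ^ 2 ≤ (x + 2 * s) ^ 2 := by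
    have : (m * s) ^ 2 ≤ (x + 2 * s) ^ 2 :=
      pow_le_pow_left₀ (by positivity) hmub 2
    nlinarith [this]
  have k4 : 0 ≤ (m - 2) * (m * s - x) ^ 2 :=
    mul_nonneg (by linarith) (sq_nonneg _)
  nlinarith [key, k1, k2, k3, k4, mul_pos hs hs, hcon, hx0, hs,
    mul_pos hs (show (0:ℝ) < s - 4 * x by linarith)]

set_option maxHeartbeats 2000000 in
/-- Case (i,I) aux with `m ≤ l`. -/
lemma calcC_aux (s : ℝ) (hs : 0 < s) (d w1 w2 : Pt) (l m : ℝ)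
    (hl : 2 ≤ l) (hm : 2 ≤ m) (hml : m ≤ l) (hw1 : ‖w1‖ = s) (hw2 : ‖w2‖ = s)
    (H1 : l * s ≤ ‖d - l • w1‖) (H2 : m * s ≤ ‖d + m • w2‖)
    (H3 : l * s ≤ ‖d + m • w2 - l • w1‖) :
    s / 4 ≤ ‖d + w2 - w1‖ := by
  by_contra hcon
  push_neg at hcon
  set x := ‖d + w2 - w1‖ with hxdef
  have hx0 : 0 ≤ x := norm_nonneg _
  set J := ⟪w1, w2⟫ with hJdef
  have E3 : ‖w1 + (m - 1) • w2‖ ^ 2 = s ^ 2 + 2 * (m - 1) * J + (m - 1) ^ 2 * s ^ 2 := by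
    rw [norm_add_sq_real, norm_smul_sq _ _ _ hw2, real_inner_smul_right, hw1]; ring
  have T2 : ‖d + m • w2‖ ≤ x + ‖w1 + (m - 1) • w2‖ := by
    have hid : d + m • w2 = (d + w2 - w1) + (w1 + (m - 1) • w2) := by module
    calc ‖d + m • w2‖ = ‖(d + w2 - w1) + (w1 + (m - 1) • w2)‖ := by rw [← hid]
    _ ≤ x + ‖w1 + (m - 1) • w2‖ := norm_add_le _ _
  have hN : m * s - x ≤ ‖w1 + (m - 1) • w2‖ := by linarith [H2, T2]
  -- J ≥ s^2 - ... : lower bound on J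
  have hJlow : (m * s - x) ^ 2 ≤ s ^ 2 + 2 * (m - 1) * J + (m - 1) ^ 2 * s ^ 2 := by
    rw [← E3]
    apply pow_le_pow_left₀ (by nlinarith) hN
  have E4 : ‖(l - 1) • w1 - (m - 1) • w2‖ ^ 2
      = (l - 1) ^ 2 * s ^ 2 - 2 * (l - 1) * (m - 1) * J + (m - 1) ^ 2 * s ^ 2 := by
    rw [norm_sub_sq_real, norm_smul_sq _ _ _ hw1, norm_smul_sq _ _ _ hw2,
      real_inner_smul_left, real_inner_smul_right]
    ring
  have T4 : ‖d + m • w2 - l • w1‖ ≤ x + ‖(l - 1) • w1 - (m - 1) • w2‖ := by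
    have hid : d + m • w2 - l • w1 = (d + w2 - w1) - ((l - 1) • w1 - (m - 1) • w2) := by module
    calc ‖d + m • w2 - l • w1‖ = ‖(d + w2 - w1) - ((l - 1) • w1 - (m - 1) • w2)‖ := by rw [← hid]
    _ ≤ x + ‖(l - 1) • w1 - (m - 1) • w2‖ := norm_sub_le _ _
  have hN4 : l * s - x ≤ ‖(l - 1) • w1 - (m - 1) • w2‖ := by linarith [H3, T4]
  have hUp : (l * s - x) ^ 2
      ≤ (l - 1) ^ 2 * s ^ 2 - 2 * (l - 1) * (m - 1) * J + (m - 1) ^ 2 * s ^ 2 := by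
    rw [← E4]
    apply pow_le_pow_left₀ (by nlinarith) hN4
  -- combine: 2(m-1)J ≥ (m*s-x)^2 - s^2 - (m-1)^2 s^2, multiply by (l-1) ≥ 1
  have hcomb := mul_le_mul_of_nonneg_left hJlow (show (0:ℝ) ≤ l - 1 by linarith)
  have key : (l * s - x) ^ 2 + (l - 1) * (m * s - x) ^ 2
      ≤ l * (l - 1) * s ^ 2 + l * (m - 1) ^ 2 * s ^ 2 := by
    nlinarith [hUp, hcomb]
  nlinarith [key, mul_pos hs hs, sq_nonneg x, hcon, hx0, hl, hm, hml, hs,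
    mul_nonneg (show (0:ℝ) ≤ l - m by linarith)
      (mul_nonneg hs.le (show (0:ℝ) ≤ s - 4 * x by linarith)),
    mul_nonneg (show (0:ℝ) ≤ m - 2 by linarith)
      (mul_nonneg hs.le (show (0:ℝ) ≤ s - 4 * x by linarith)),
    mul_nonneg (mul_nonneg (show (0:ℝ) ≤ l - m by linarith) (show (0:ℝ) ≤ m - 2 by linarith)) (mul_pos hs hs).le,
    mul_nonneg (show (0:ℝ) ≤ (l - m) * (m - 2) by nlinarith) (mul_nonneg hs.le hx0),
    mul_nonneg (mul_nonneg (show (0:ℝ) ≤ l - 2 by linarith) hs.le) hx0,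
    mul_nonneg (show (0:ℝ) ≤ l - 2 by linarith) (mul_pos hs hs).le,
    sq_nonneg ((l - m) * s), sq_nonneg ((m - 2) * s),
    mul_pos (mul_pos hs hs) (show (0:ℝ) < l by linarith),
    mul_nonneg (mul_nonneg hx0 hs.le) (show (0:ℝ) ≤ l - 2 by linarith),
    mul_nonneg (mul_nonneg hx0 hx0) (show (0:ℝ) ≤ l - 2 by linarith),
    mul_pos (mul_pos hs (show (0:ℝ) < s - 2 * x by linarith)) (show (0:ℝ) < l by linarith)]

set_option maxHeartbeats 2000000 in
/-- Case (i,I). -/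
lemma calcC (s : ℝ) (hs : 0 < s) (d w1 w2 : Pt) (l m : ℝ)
    (hl : 2 ≤ l) (hm : 2 ≤ m) (hw1 : ‖w1‖ = s) (hw2 : ‖w2‖ = s)
    (H1 : l * s ≤ ‖d - l • w1‖) (H2 : m * s ≤ ‖d + m • w2‖)
    (H3 : l * s ≤ ‖d + m • w2 - l • w1‖) (H4 : m * s ≤ ‖d + m • w2 - l • w1‖) :
    s / 4 ≤ ‖d + w2 - w1‖ := by
  rcases le_total m l with h | h
  · exact calcC_aux s hs d w1 w2 l m hl hm h hw1 hw2 H1 H2 H3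
  · have H1' : m * s ≤ ‖(-d) - m • w2‖ := by
      rw [show (-d) - m • w2 = -(d + m • w2) by abel, norm_neg]; exact H2
    have H2' : l * s ≤ ‖(-d) + l • w1‖ := by
      rw [show (-d) + l • w1 = -(d - l • w1) by abel, norm_neg]; exact H1
    have H3' : m * s ≤ ‖(-d) + l • w1 - m • w2‖ := by
      rw [show (-d) + l • w1 - m • w2 = -(d + m • w2 - l • w1) by abel, norm_neg]; exact H4
    have := calcC_aux s hs (-d) w2 w1 m l hm hl h hw2 hw1 H1' H2' H3'
    rwa [show (-d) + w1 - w2 = -(d + w2 - w1) by abel, norm_neg] at this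

set_option maxHeartbeats 2000000 in
/-- Shared-vertex case. -/
lemma calcShared (s : ℝ) (hs : 0 < s) (z c c' : Pt) (l1 l2 r1 r2 : ℝ)
    (hl1 : 2 ≤ l1) (hl2 : 2 ≤ l2) (hr1 : 1 ≤ r1) (hr2 : 1 ≤ r2)
    (hc : ‖c - z‖ = l1 * s) (hc' : ‖c' - z‖ = l2 * s)
    (hang : 2 * ⟪c - z, c' - z⟫ ≤ (l1 * s) * (l2 * s)) :
    s / 4 ≤ ‖(r1 / l1) • (c - z) - (r2 / l2) • (c' - z)‖ := by
  have hl1' : (0:ℝ) < l1 := by linarith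
  have hl2' : (0:ℝ) < l2 := by linarith
  have hE : ‖(r1 / l1) • (c - z) - (r2 / l2) • (c' - z)‖ ^ 2
      = (r1 / l1) ^ 2 * (l1 * s) ^ 2 - 2 * ((r1 / l1) * (r2 / l2)) * ⟪c - z, c' - z⟫
        + (r2 / l2) ^ 2 * (l2 * s) ^ 2 := by
    rw [norm_sub_sq_real, norm_smul_sq _ _ _ hc, norm_smul_sq _ _ _ hc',
      real_inner_smul_left, real_inner_smul_right]
    ring
  have hE' : ‖(r1 / l1) • (c - z) - (r2 / l2) • (c' - z)‖ ^ 2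
      = r1 ^ 2 * s ^ 2 - 2 * ((r1 / l1) * (r2 / l2)) * ⟪c - z, c' - z⟫ + r2 ^ 2 * s ^ 2 := by
    rw [hE]; field_simp
  have hq : (s / 4) ^ 2 ≤ ‖(r1 / l1) • (c - z) - (r2 / l2) • (c' - z)‖ ^ 2 := by
    rw [hE']
    have key : 2 * ((r1 / l1) * (r2 / l2)) * ⟪c - z, c' - z⟫ ≤ r1 * r2 * s ^ 2 := by
      have hpos : 0 < (r1 / l1) * (r2 / l2) := by positivity
      have := mul_le_mul_of_nonneg_left hang hpos.le
      calc 2 * ((r1 / l1) * (r2 / l2)) * ⟪c - z, c' - z⟫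
          = (r1 / l1) * (r2 / l2) * (2 * ⟪c - z, c' - z⟫) := by ring
        _ ≤ (r1 / l1) * (r2 / l2) * ((l1 * s) * (l2 * s)) := this
        _ = r1 * r2 * s ^ 2 := by field_simp
    nlinarith [key, sq_nonneg (r1 - r2), mul_pos hs hs, hr1, hr2,
      mul_nonneg (mul_nonneg (show (0:ℝ) ≤ r1 - 1 by linarith) (show (0:ℝ) ≤ r2 - 1 by linarith)) (mul_pos hs hs).le]
  have h0 : (0:ℝ) ≤ s / 4 := by linarith
  exact (pow_le_pow_iff_left₀ h0 (norm_nonneg _) (by norm_num)).mp hq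

end Calc

lemma shared_case {R : Finset Pt} {S : Finset Link} (hMST : IsMSTLinks R S)
    {f g : Link} (hf : f ∈ S) (hg : g ∈ S) (z c c' : Pt)
    (hforz : f = (z, c) ∨ f = (c, z)) (hgorz : g = (z, c') ∨ g = (c', z))
    (hcc' : c ≠ c') (hfg : f ≠ g) (s : ℝ) (hs : 0 < s)
    (hlf : 2 * s ≤ dist z c) (hlg : 2 * s ≤ dist z c') (p q : Pt)
    (hp : p = z + ((1 : ℝ) / (dist z c / s)) • (c - z) ∨
          p = z + ((dist z c / s - 1) / (dist z c / s)) • (c - z))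
    (hq : q = z + ((1 : ℝ) / (dist z c' / s)) • (c' - z) ∨
          q = z + ((dist z c' / s - 1) / (dist z c' / s)) • (c' - z)) :
    s / 4 ≤ dist p q := by
  have hang := mst_angle hMST hf hg z c c' hforz hgorz hcc' hfg
  have hl1 : 2 ≤ dist z c / s := (le_div_iff₀ hs).mpr (by linarith)
  have hl2 : 2 ≤ dist z c' / s := (le_div_iff₀ hs).mpr (by linarith)
  have hc : ‖c - z‖ = (dist z c / s) * s := by
    rw [div_mul_cancel₀ _ hs.ne', ← norm_sub_rev, ← dist_eq_norm]
  have hc' : ‖c' - z‖ = (dist z c' / s) * s := by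
    rw [div_mul_cancel₀ _ hs.ne', ← norm_sub_rev, ← dist_eq_norm]
  have hang' : 2 * (inner ℝ (c - z) (c' - z) : ℝ)
      ≤ ((dist z c / s) * s) * ((dist z c' / s) * s) := by
    rw [div_mul_cancel₀ _ hs.ne', div_mul_cancel₀ _ hs.ne']; exact hang
  have hdq : ∀ X Y : Pt, dist (z + X) (z + Y) = ‖X - Y‖ := by
    intro X Y; rw [dist_eq_norm]; congr 1; abel
  rcases hp with rfl | rfl <;> rcases hq with rfl | rfl <;> rw [hdq]
  · exact calcShared s hs z c c' _ _ 1 1 hl1 hl2 le_rfl le_rfl hc hc' hang'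
  · exact calcShared s hs z c c' _ _ 1 (dist z c' / s - 1) hl1 hl2 le_rfl
      (by linarith) hc hc' hang'
  · exact calcShared s hs z c c' _ _ (dist z c / s - 1) 1 hl1 hl2 (by linarith)
      le_rfl hc hc' hang'
  · exact calcShared s hs z c c' _ _ (dist z c / s - 1) (dist z c' / s - 1) hl1 hl2
      (by linarith) (by linarith) hc hc' hang'

lemma ppt_swap (s : ℝ) (hs : 0 < s) (a b : Pt) (hab : a ≠ b) :
    a + (s / dist a b) • (b - a)
      = b + ((dist a b / s - 1) / (dist a b / s)) • (a - b) := by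
  have hD : dist a b ≠ 0 := dist_ne_zero.mpr hab
  have hco : (dist a b / s - 1) / (dist a b / s) = 1 - s / dist a b := by
    field_simp
  rw [hco, sub_smul, one_smul]
  have h2 : (s / dist a b) • (a - b) = -((s / dist a b) • (b - a)) := by
    rw [← smul_neg]; congr 1; abel
  rw [h2]
  abel

set_option maxHeartbeats 1000000 in
lemma separation {R : Finset Pt} {S : Finset Link} (hMST : IsMSTLinks R S)
    {f g : Link} (hf : f ∈ S) (hg : g ∈ S) (a b a' b' : Pt)
    (hfor : f = (a, b) ∨ f = (b, a)) (hgor : g = (a', b') ∨ g = (b', a'))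
    (hne1 : ¬(a = a' ∧ b = b')) (hne2 : ¬(a = b' ∧ b = a'))
    (s : ℝ) (hs : 0 < s) (hlf : 2 * s ≤ dist a b) (hlg : 2 * s ≤ dist a' b') :
    s / 4 ≤ dist (a + (s / dist a b) • (b - a)) (a' + (s / dist a' b') • (b' - a')) := by
  have hend := hMST.1.1
  have hab : a ≠ b := by
    rcases hfor with h | h
    · exact (h ▸ hend f hf).2.2
    · exact ((h ▸ hend f hf).2.2).symm
  have ha'b' : a' ≠ b' := by
    rcases hgor with h | h
    · exact (h ▸ hend g hg).2.2
    · exact ((h ▸ hend g hg).2.2).symm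
  have hfg : f ≠ g := by
    intro hfgeq
    rcases hfor with h | h <;> rcases hgor with h' | h' <;>
      rw [hfgeq, h'] at h <;> rcases Prod.mk.injEq .. ▸ h with ⟨e1, e2⟩
    · exact hne1 ⟨e1.symm, e2.symm⟩
    · exact hne2 ⟨e1.symm, e2.symm⟩
    · exact hne2 ⟨e2.symm, e1.symm⟩
    · exact hne1 ⟨e2.symm, e1.symm⟩
  by_cases h1 : a = a'
  · subst h1
    have hbb' : b ≠ b' := fun hc => hne1 ⟨rfl, hc⟩
    exact shared_case hMST hf hg a b b' hfor hgor hbb' hfg s hs hlf hlg _ _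
      (Or.inl (by rw [one_div_div])) (Or.inl (by rw [one_div_div]))
  by_cases h2 : a = b'
  · subst h2
    have hba' : b ≠ a' := fun hc => hne2 ⟨rfl, hc⟩
    have hgorz : g = (a, a') ∨ g = (a', a) := by
      rcases hgor with h | h
      · exact Or.inr h
      · exact Or.inl h
    exact shared_case hMST hf hg a b a' hfor hgorz hba' hfg s hs hlf
      (by rw [_root_.dist_comm]; exact hlg) _ _
      (Or.inl (by rw [one_div_div]))
      (Or.inr (by rw [ppt_swap s hs a' a ha'b', _root_.dist_comm a' a]))
  by_cases h3 : b = a'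
  · subst h3
    have hab' : a ≠ b' := h2
    exact shared_case hMST hf hg b a b' hfor.symm hgor hab' hfg s hs
      (by rw [_root_.dist_comm]; exact hlf) hlg _ _
      (Or.inr (by rw [ppt_swap s hs a b hab, _root_.dist_comm a b]))
      (Or.inl (by rw [one_div_div]))
  by_cases h4 : b = b'
  · subst h4
    have haa' : a ≠ a' := h1
    have hgorz : g = (b, a') ∨ g = (a', b) := by
      rcases hgor with h | h
      · exact Or.inr h
      · exact Or.inl h
    exact shared_case hMST hf hg b a a' hfor.symm hgorz haa' hfg s hs
      (by rw [_root_.dist_comm]; exact hlf)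
      (by rw [_root_.dist_comm]; exact hlg) _ _
      (Or.inr (by rw [ppt_swap s hs a b hab, _root_.dist_comm a b]))
      (Or.inr (by rw [ppt_swap s hs a' b ha'b', _root_.dist_comm a' b]))
  -- vertex-disjoint case
  have cutf := mst_cut hMST hf hg a b a' b' hfor hgor
    (Ne.symm h1) (Ne.symm h3) (Ne.symm h2) (Ne.symm h4) hfg
  have cutg := mst_cut hMST hg hf a' b' a b hgor hfor h1 h2 h3 h4 (Ne.symm hfg)
  have hD : dist a b ≠ 0 := dist_ne_zero.mpr hab
  have hG : dist a' b' ≠ 0 := dist_ne_zero.mpr ha'b'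
  set l := dist a b / s with hldef
  set m := dist a' b' / s with hmdef
  set w1 := (s / dist a b) • (b - a) with hw1def
  set w2 := (s / dist a' b') • (b' - a') with hw2def
  set d := a' - a with hddef
  have hl : 2 ≤ l := (le_div_iff₀ hs).mpr (by linarith)
  have hm : 2 ≤ m := (le_div_iff₀ hs).mpr (by linarith)
  have hw1 : ‖w1‖ = s := by
    rw [hw1def, norm_smul, Real.norm_eq_abs, abs_of_pos (by positivity), ← dist_eq_norm']
    field_simp
  have hw2 : ‖w2‖ = s := by
    rw [hw2def, norm_smul, Real.norm_eq_abs, abs_of_pos (by positivity), ← dist_eq_norm']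
    field_simp
  have hlw1 : l • w1 = b - a := by
    rw [hldef, hw1def, smul_smul]
    rw [show dist a b / s * (s / dist a b) = 1 by field_simp]
    rw [one_smul]
  have hmw2 : m • w2 = b' - a' := by
    rw [hmdef, hw2def, smul_smul]
    rw [show dist a' b' / s * (s / dist a' b') = 1 by field_simp]
    rw [one_smul]
  have hDl : dist a b = l * s := by rw [hldef]; field_simp
  have hGm : dist a' b' = m * s := by rw [hmdef]; field_simp
  have hd1 : dist a' b = ‖d - l • w1‖ := by
    rw [dist_eq_norm, hlw1, hddef]; congr 1; abel
  have hd2 : dist b' b = ‖d + m • w2 - l • w1‖ := by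
    rw [dist_eq_norm, hlw1, hmw2, hddef]; congr 1; abel
  have hd3 : dist a' a = ‖d‖ := by rw [dist_eq_norm, hddef]
  have hd4 : dist b' a = ‖d + m • w2‖ := by
    rw [dist_eq_norm, hmw2, hddef]; congr 1; abel
  have hgoal : dist (a + w1) (a' + w2) = ‖d + w2 - w1‖ := by
    rw [dist_eq_norm, show a + w1 - (a' + w2) = -(d + w2 - w1) by rw [hddef]; abel,
      norm_neg]
  rw [hgoal]
  rcases cutf with ⟨cf1, cf2⟩ | ⟨cf1, cf2⟩ <;> rcases cutg with ⟨cg1, cg2⟩ | ⟨cg1, cg2⟩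
  · -- (i, I)
    refine calcC s hs d w1 w2 l m hl hm hw1 hw2 ?_ ?_ ?_ ?_
    · rw [← hd1, ← hDl]; exact cf1
    · rw [← hd4, ← hGm]; rw [_root_.dist_comm a b'] at cg1; exact cg1
    · rw [← hd2, ← hDl]; exact cf2
    · rw [← hd2, ← hGm]; rw [_root_.dist_comm b b'] at cg2; exact cg2
  · -- (i, II)
    refine calcA s hs d w1 w2 l m hl hm hw1 hw2 ?_ ?_
    · rw [← hd1, ← hDl]; exact cf1
    · rw [← hd3, ← hGm]; rw [_root_.dist_comm a a'] at cg1; exact cg1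
  · -- (ii, I)
    have H1 : m * s ≤ ‖(-d) - m • w2‖ := by
      rw [show (-d) - m • w2 = -(d + m • w2) by abel, norm_neg, ← hd4, ← hGm]
      rw [_root_.dist_comm a b'] at cg1; exact cg1
    have H2 : l * s ≤ ‖(-d)‖ := by
      rw [norm_neg, ← hd3, ← hDl]; exact cf1
    have := calcA s hs (-d) w2 w1 m l hm hl hw2 hw1 H1 H2
    rwa [show (-d) + w1 - w2 = -(d + w2 - w1) by abel, norm_neg] at this
  · -- (ii, II)
    refine calcB s hs d w1 w2 l m hl hm hw1 hw2 ?_ ?_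
    · rw [← hd3, ← hGm]; rw [_root_.dist_comm a a'] at cg1; exact cg1
    · rw [← hd4, ← hDl]; exact cf2

lemma packing_count {ι : Type*} (T : Finset ι) (p : ι → Pt) (r : ℝ) (hr : 0 < r)
    (hsep : ∀ i ∈ T, ∀ j ∈ T, i ≠ j → r ≤ dist (p i) (p j))
    (u : Pt) (Rout rin : ℝ) (hrin : 0 ≤ rin) (hRr : rin ≤ Rout)
    (hmem : ∀ i ∈ T, ball (p i) (r / 2) ⊆ ball u Rout \ ball u rin) :
    (T.card : ℝ) * (r / 2) ^ 2 ≤ Rout ^ 2 - rin ^ 2 := by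
  classical
  set v := volume (ball (0 : Pt) 1) with hv
  have hv0 : v ≠ 0 := (measure_ball_pos volume _ one_pos).ne'
  have hvtop : v ≠ ⊤ := measure_ball_lt_top.ne
  have hdisj : (↑T : Set ι).PairwiseDisjoint (fun i => ball (p i) (r / 2)) := by
    intro a ha b hb hab
    exact ball_disjoint_ball (by linarith [hsep a ha b hb hab])
  have hball : ∀ a : ι, volume (ball (p a) (r / 2))
      = ENNReal.ofReal ((r / 2) ^ 2) * v := by
    intro a
    rw [hv, MeasureTheory.Measure.addHaar_ball volume (p a) (by positivity)]
    congr 2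
    rw [finrank_euclideanSpace_fin]
  have hsub : (⋃ a ∈ T, ball (p a) (r / 2)) ⊆ ball u Rout \ ball u rin :=
    Set.iUnion₂_subset hmem
  have hdiff : volume (ball u Rout \ ball u rin)
      = ENNReal.ofReal (Rout ^ 2) * v - ENNReal.ofReal (rin ^ 2) * v := by
    rw [measure_diff (ball_subset_ball hRr) measurableSet_ball.nullMeasurableSet
      measure_ball_lt_top.ne, hv,
      MeasureTheory.Measure.addHaar_ball volume u (hrin.trans hRr),
      MeasureTheory.Measure.addHaar_ball volume u hrin, finrank_euclideanSpace_fin]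
  have hchain : (T.card : ℝ≥0∞) * (ENNReal.ofReal ((r / 2) ^ 2) * v)
      ≤ ENNReal.ofReal (Rout ^ 2 - rin ^ 2) * v := by
    calc (T.card : ℝ≥0∞) * (ENNReal.ofReal ((r / 2) ^ 2) * v)
        = ∑ a ∈ T, volume (ball (p a) (r / 2)) := by
          rw [Finset.sum_congr rfl (fun a _ => hball a), Finset.sum_const, nsmul_eq_mul]
      _ = volume (⋃ a ∈ T, ball (p a) (r / 2)) :=
          (measure_biUnion_finset hdisj (fun b _ => measurableSet_ball)).symm
      _ ≤ volume (ball u Rout \ ball u rin) := measure_mono hsub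
      _ = ENNReal.ofReal (Rout ^ 2) * v - ENNReal.ofReal (rin ^ 2) * v := hdiff
      _ = (ENNReal.ofReal (Rout ^ 2) - ENNReal.ofReal (rin ^ 2)) * v := by
          rw [ENNReal.sub_mul (fun _ _ => hvtop)]
      _ = ENNReal.ofReal (Rout ^ 2 - rin ^ 2) * v := by
          rw [ENNReal.ofReal_sub _ (sq_nonneg rin)]
  rw [← mul_assoc] at hchain
  have h2 := (ENNReal.mul_le_mul_iff_left hv0 hvtop).mp hchain
  have h3 : ENNReal.ofReal ((T.card : ℝ) * (r / 2) ^ 2) ≤ ENNReal.ofReal (Rout ^ 2 - rin ^ 2) := by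
    rw [ENNReal.ofReal_mul (by positivity), ENNReal.ofReal_natCast]
    exact h2
  have h4 : (0:ℝ) ≤ Rout ^ 2 - rin ^ 2 := by nlinarith
  exact (ENNReal.ofReal_le_ofReal_iff h4).mp h3

set_option maxHeartbeats 4000000 in
lemma fiber_card_bound {R : Finset Pt} {S : Finset Link} (hMST : IsMSTLinks R S)
    {i : Link} (hi : i ∈ S) (k : ℕ) (Fk : Finset Link) (hFkS : Fk ⊆ S)
    (hFk : ∀ j ∈ Fk, len i ≤ len j ∧ (k:ℝ) * len i ≤ dd i j ∧ dd i j < ((k:ℝ)+1) * len i) :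
    (Fk.card : ℝ) ≤ 4608 * ((k:ℝ) + 1) := by
  classical
  set ℓ := len i with hldef
  have hiend := hMST.1.1 i hi
  have hℓpos : 0 < ℓ := dist_pos.mpr hiend.2.2
  set u := i.1 with hu
  set v := i.2 with hvv
  have huv : dist v u = ℓ := by rw [hldef, len, _root_.dist_comm]
  set lo : LinearOrder Link := IsWellOrder.linearOrder WellOrderingRel with hlo
  set rev : Link → Link := fun j => (j.2, j.1) with hrev
  set T := Fk.filter (fun j => rev j ∈ Fk → lo.le j (rev j)) with hT
  have hTsub : T ⊆ Fk := Finset.filter_subset _ _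
  have hsplit : Fk.card ≤ 2 * T.card := by
    have hsub : Fk ⊆ T ∪ T.image rev := by
      intro j hj
      by_cases hc : rev j ∈ Fk → lo.le j (rev j)
      · exact Finset.mem_union_left _ (Finset.mem_filter.mpr ⟨hj, hc⟩)
      · push_neg at hc
        obtain ⟨hrf, hnle⟩ := hc
        refine Finset.mem_union_right _ (Finset.mem_image.mpr ⟨rev j, ?_, rfl⟩)
        refine Finset.mem_filter.mpr ⟨hrf, fun _ => ?_⟩
        exact ((Preorder.lt_iff_le_not_ge (self := lo.toPreorder) _ _).mp hnle).1
    calc Fk.card ≤ (T ∪ T.image rev).card := Finset.card_le_card hsub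
      _ ≤ T.card + (T.image rev).card := Finset.card_union_le _ _
      _ ≤ T.card + T.card := by
          have := Finset.card_image_le (f := rev) (s := T)
          omega
      _ = 2 * T.card := by ring
  set orient : Link → Link := fun j =>
    if min (dist j.1 u) (dist j.1 v) ≤ min (dist j.2 u) (dist j.2 v) then j else rev j
    with horient
  set pj : Link → Pt := fun j =>
    (orient j).1 + ((ℓ/2) / dist (orient j).1 (orient j).2) • ((orient j).2 - (orient j).1)
    with hpj
  have hor : ∀ j : Link, j = ((orient j).1, (orient j).2) ∨ j = ((orient j).2, (orient j).1) := by
    intro j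
    by_cases hc : min (dist j.1 u) (dist j.1 v) ≤ min (dist j.2 u) (dist j.2 v)
    · left; rw [horient]; simp only [if_pos hc]
    · right; rw [horient]; simp only [if_neg hc]; rfl
  have hdor : ∀ j : Link, dist (orient j).1 (orient j).2 = len j := by
    intro j
    by_cases hc : min (dist j.1 u) (dist j.1 v) ≤ min (dist j.2 u) (dist j.2 v)
    · rw [horient]; simp only [if_pos hc]; rfl
    · rw [horient]; simp only [if_neg hc]; exact _root_.dist_comm j.2 j.1
  have hddeq : ∀ j : Link, dd i j
      = min (min (dist j.1 u) (dist j.1 v)) (min (dist j.2 u) (dist j.2 v)) := by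
    intro j
    have h1 : dd i j
        = min (min (dist i.1 j.1) (dist i.2 j.1)) (min (dist i.1 j.2) (dist i.2 j.2)) := by
      unfold dd
      exact min_min_min_comm _ _ _ _
    rw [h1, _root_.dist_comm i.1 j.1, _root_.dist_comm i.2 j.1, _root_.dist_comm i.1 j.2,
      _root_.dist_comm i.2 j.2]
  have hnear : ∀ j : Link, min (dist (orient j).1 u) (dist (orient j).1 v) ≤ dd i j := by
    intro j
    rw [hddeq j]
    by_cases hc : min (dist j.1 u) (dist j.1 v) ≤ min (dist j.2 u) (dist j.2 v)
    · rw [horient]; simp only [if_pos hc]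
      exact le_min le_rfl hc
    · rw [horient]; simp only [if_neg hc]
      exact le_min (le_of_not_ge hc) le_rfl
  have hfar : ∀ j : Link, dd i j ≤ dist (orient j).1 u := by
    intro j
    rw [hddeq j]
    by_cases hc : min (dist j.1 u) (dist j.1 v) ≤ min (dist j.2 u) (dist j.2 v)
    · rw [horient]; simp only [if_pos hc]
      exact le_trans (min_le_left _ _) (min_le_left _ _)
    · rw [horient]; simp only [if_neg hc]
      exact le_trans (min_le_right _ _) (min_le_left _ _)
  have hlenpos : ∀ j ∈ Fk, 0 < len j := fun j hj => lt_of_lt_of_le hℓpos (hFk j hj).1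
  have hpdist : ∀ j ∈ Fk, dist (pj j) (orient j).1 = ℓ/2 := by
    intro j hj
    rw [hpj]
    simp only
    rw [dist_eq_norm, add_sub_cancel_left, norm_smul, Real.norm_eq_abs, ← dist_eq_norm',
      hdor j, abs_of_pos (div_pos (by linarith) (hlenpos j hj)),
      div_mul_cancel₀ _ (hlenpos j hj).ne']
  have hsymor : ∀ j : Link, s((orient j).1, (orient j).2) = s(j.1, j.2) := by
    intro j
    by_cases hc : min (dist j.1 u) (dist j.1 v) ≤ min (dist j.2 u) (dist j.2 v)
    · rw [horient]; simp only [if_pos hc]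
    · rw [horient]; simp only [if_neg hc]; exact Sym2.eq_swap
  have hsep : ∀ j ∈ T, ∀ j' ∈ T, j ≠ j' → ℓ/8 ≤ dist (pj j) (pj j') := by
    intro j hj j' hj' hjj'
    have hjF := hTsub hj
    have hj'F := hTsub hj'
    have hsymne : s(j.1, j.2) ≠ s(j'.1, j'.2) := by
      intro hsym
      rcases Sym2.eq_iff.mp hsym with ⟨e1, e2⟩ | ⟨e1, e2⟩
      · exact hjj' (Prod.ext e1 e2)
      · have hrj : rev j = j' := Prod.ext e2 e1
        have hrj' : rev j' = j := Prod.ext e1.symm e2.symm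
        have le1 : lo.le j j' := by
          have := (Finset.mem_filter.mp hj).2
          rw [hrj] at this
          exact this hj'F
        have le2 : lo.le j' j := by
          have := (Finset.mem_filter.mp hj').2
          rw [hrj'] at this
          exact this hjF
        exact hjj' (lo.le_antisymm _ _ le1 le2)
    have hne1 : ¬((orient j).1 = (orient j').1 ∧ (orient j).2 = (orient j').2) := by
      rintro ⟨e1, e2⟩
      apply hsymne
      calc s(j.1, j.2) = s((orient j).1, (orient j).2) := (hsymor j).symm
        _ = s((orient j').1, (orient j').2) := by rw [e1, e2]
        _ = s(j'.1, j'.2) := hsymor j'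
    have hne2 : ¬((orient j).1 = (orient j').2 ∧ (orient j).2 = (orient j').1) := by
      rintro ⟨e1, e2⟩
      apply hsymne
      calc s(j.1, j.2) = s((orient j).1, (orient j).2) := (hsymor j).symm
        _ = s((orient j').2, (orient j').1) := by rw [e1, e2]
        _ = s((orient j').1, (orient j').2) := Sym2.eq_swap
        _ = s(j'.1, j'.2) := hsymor j'
    have hsepj := separation hMST (hFkS hjF) (hFkS hj'F)
      (orient j).1 (orient j).2 (orient j').1 (orient j').2 (hor j) (hor j') hne1 hne2
      (ℓ/2) (by linarith)
      (by rw [hdor j]; linarith [(hFk j hjF).1])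
      (by rw [hdor j']; linarith [(hFk j' hj'F).1])
    rw [hpj]
    simp only
    linarith [hsepj]
  have hmemball : ∀ j ∈ T, ball (pj j) (ℓ/8/2)
      ⊆ ball u (((k:ℝ)+3)*ℓ) \ ball u (max ((k:ℝ)-1) 0 * ℓ) := by
    intro j hj y hy
    have hjF := hTsub hj
    have hy' : dist y (pj j) < ℓ/8/2 := mem_ball.mp hy
    have h1 : dist (orient j).1 u < ((k:ℝ)+2) * ℓ := by
      have hdd2 := (hFk j hjF).2.2
      have hn := hnear j
      rcases le_total (dist (orient j).1 u) (dist (orient j).1 v) with h | h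
      · rw [min_eq_left h] at hn; linarith
      · rw [min_eq_right h] at hn
        have ht : dist (orient j).1 u ≤ dist (orient j).1 v + dist v u := dist_triangle _ _ _
        rw [huv] at ht
        linarith
    have h2 : (k:ℝ) * ℓ ≤ dist (orient j).1 u := le_trans (hFk j hjF).2.1 (hfar j)
    have h3 : dist y u < ((k:ℝ)+3) * ℓ := by
      have t1 : dist y u ≤ dist y (pj j) + dist (pj j) (orient j).1 + dist (orient j).1 u :=
        dist_triangle4 y (pj j) (orient j).1 u
      rw [hpdist j hjF] at t1
      linarith
    have h4 : max ((k:ℝ)-1) 0 * ℓ ≤ dist y u := by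
      have t1 : dist (orient j).1 u ≤ dist (orient j).1 (pj j) + dist (pj j) y + dist y u :=
        dist_triangle4 _ _ _ _
      rw [_root_.dist_comm (orient j).1 (pj j), hpdist j hjF,
        _root_.dist_comm (pj j) y] at t1
      rcases le_total ((k:ℝ)-1) 0 with h | h
      · rw [max_eq_right h, zero_mul]
        exact dist_nonneg
      · rw [max_eq_left h]
        nlinarith [hℓpos]
    exact ⟨mem_ball.mpr h3, fun hc => absurd (mem_ball.mp hc) (not_lt.mpr h4)⟩
  have hk0 : (0:ℝ) ≤ (k:ℝ) := Nat.cast_nonneg k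
  have hpack := packing_count T pj (ℓ/8) (by linarith) hsep u (((k:ℝ)+3)*ℓ)
    (max ((k:ℝ)-1) 0 * ℓ) (by positivity)
    (mul_le_mul_of_nonneg_right (max_le (by linarith) (by linarith)) hℓpos.le) hmemball
  have hRHS : (((k:ℝ)+3)*ℓ)^2 - (max ((k:ℝ)-1) 0 * ℓ)^2 ≤ 9*((k:ℝ)+1)*ℓ^2 := by
    rcases le_total ((k:ℝ)-1) 0 with h | h
    · rw [max_eq_right h, zero_mul]
      nlinarith [mul_nonneg (mul_nonneg hk0 (show (0:ℝ) ≤ 1 - (k:ℝ) by linarith))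
        (sq_nonneg ℓ), sq_nonneg ℓ]
    · rw [max_eq_left h]
      nlinarith [mul_nonneg (show (0:ℝ) ≤ (k:ℝ)+1 by linarith) (sq_nonneg ℓ)]
  have hTcard : (T.card:ℝ) ≤ 2304*((k:ℝ)+1) := by
    have h256 : (0:ℝ) < ℓ^2 := by positivity
    nlinarith [hpack, hRHS, h256]
  have hcast : (Fk.card : ℝ) ≤ 2 * (T.card:ℝ) := by exact_mod_cast hsplit
  linarith

lemma summable_g (α : ℝ) (hα : 2 < α) :
    Summable (fun k : ℕ => ((k:ℝ) + 1) * (max 1 (k:ℝ)) ^ (-α)) := by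
  have hsum0 : Summable (fun k : ℕ => ((k:ℝ) ^ (α - 1))⁻¹) :=
    Real.summable_nat_rpow_inv.mpr (by linarith)
  rw [← summable_nat_add_iff 1]
  have hmaj : Summable (fun n : ℕ => 2 * (((n + 1 : ℕ):ℝ) ^ (α - 1))⁻¹) :=
    ((summable_nat_add_iff 1).mpr hsum0).mul_left 2
  apply Summable.of_nonneg_of_le _ _ hmaj
  · intro n
    have h1 : (0:ℝ) ≤ ((n + 1 : ℕ):ℝ) + 1 := by positivity
    exact mul_nonneg h1 (Real.rpow_nonneg (le_max_of_le_left zero_le_one) _)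
  · intro n
    have hK : (1:ℝ) ≤ ((n:ℝ) + 1) := by
      have : (0:ℝ) ≤ (n:ℝ) := Nat.cast_nonneg n
      linarith
    have hKpos : (0:ℝ) < (n:ℝ) + 1 := by linarith
    have hcast : ((n + 1 : ℕ):ℝ) = (n:ℝ) + 1 := by push_cast; ring
    rw [hcast]
    have hmax : max 1 ((n:ℝ) + 1) = (n:ℝ) + 1 := max_eq_right hK
    rw [hmax]
    have e1 : ((n:ℝ) + 1) * ((n:ℝ) + 1) ^ (-α) = ((n:ℝ) + 1) ^ (1 - α) := by
      rw [show (1 - α) = 1 + (-α) by ring, Real.rpow_add hKpos, Real.rpow_one]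
    have e2 : ((n:ℝ) + 1) ^ (1 - α) = (((n:ℝ) + 1) ^ (α - 1))⁻¹ := by
      rw [show (1 - α) = -(α - 1) by ring, Real.rpow_neg (by linarith)]
    calc ((n:ℝ) + 1 + 1) * ((n:ℝ) + 1) ^ (-α)
        ≤ (2 * ((n:ℝ) + 1)) * ((n:ℝ) + 1) ^ (-α) := by
          apply mul_le_mul_of_nonneg_right (by linarith)
            (Real.rpow_nonneg (by linarith) _)
      _ = 2 * (((n:ℝ) + 1) * ((n:ℝ) + 1) ^ (-α)) := by ring
      _ = 2 * (((n:ℝ) + 1) ^ (α - 1))⁻¹ := by rw [e1, e2]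

set_option maxHeartbeats 1000000 in
theorem mst_sparsity_main (α : ℝ) (hα : 2 < α) :
    ∃ C : ℝ, ∀ R : Finset Pt, 2 ≤ R.card →
      ∀ S : Finset Link, IsMSTLinks R S →
        ∀ i ∈ S,
          ∑ j ∈ S.filter (fun j => j ≠ i ∧ len i ≤ len j),
            min 1 (len i ^ α / dd i j ^ α) ≤ C := by
  classical
  set g : ℕ → ℝ := fun k => ((k:ℝ) + 1) * (max 1 (k:ℝ)) ^ (-α) with hg
  have hgnonneg : ∀ k, 0 ≤ g k := by
    intro k
    have h1 : (0:ℝ) ≤ (k:ℝ) + 1 := by positivity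
    exact mul_nonneg h1 (Real.rpow_nonneg (le_max_of_le_left zero_le_one) _)
  have hgsum : Summable g := summable_g α hα
  refine ⟨4608 * ∑' k, g k, ?_⟩
  intro R hR S hMST i hi
  set ℓ := len i with hldef
  have hiend := hMST.1.1 i hi
  have hℓpos : 0 < ℓ := dist_pos.mpr hiend.2.2
  have hddnn : ∀ j : Link, 0 ≤ dd i j := by
    intro j
    unfold dd
    exact le_min (le_min dist_nonneg dist_nonneg) (le_min dist_nonneg dist_nonneg)
  set F := S.filter (fun j => j ≠ i ∧ len i ≤ len j) with hF
  set κ : Link → ℕ := fun j => ⌊dd i j / ℓ⌋₊ with hκ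
  have hmaps : ∀ j ∈ F, κ j ∈ F.image κ := fun j hj => Finset.mem_image_of_mem κ hj
  rw [← Finset.sum_fiberwise_of_maps_to hmaps (fun j => min 1 (len i ^ α / dd i j ^ α))]
  have hfiber : ∀ k, ∀ j ∈ F.filter (fun j => κ j = k),
      len i ≤ len j ∧ (k:ℝ) * ℓ ≤ dd i j ∧ dd i j < ((k:ℝ)+1) * ℓ := by
    intro k j hj
    obtain ⟨hjF, hjk⟩ := Finset.mem_filter.mp hj
    obtain ⟨hjS, _, hlen⟩ := Finset.mem_filter.mp hjF
    refine ⟨hlen, ?_, ?_⟩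
    · have h1 : ((κ j : ℕ):ℝ) ≤ dd i j / ℓ := Nat.floor_le (div_nonneg (hddnn j) hℓpos.le)
      rw [hjk] at h1
      exact (le_div_iff₀ hℓpos).mp h1
    · have h2 : dd i j / ℓ < ((κ j : ℕ):ℝ) + 1 := Nat.lt_floor_add_one _
      rw [hjk] at h2
      have h3 := (div_lt_iff₀ hℓpos).mp h2
      linarith
  have keybound : ∀ k ∈ F.image κ,
      (∑ j ∈ F.filter (fun j => κ j = k), min 1 (len i ^ α / dd i j ^ α)) ≤ 4608 * g k := by
    intro k hk
    set Fk := F.filter (fun j => κ j = k) with hFkdef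
    have hFkS : Fk ⊆ S := by
      intro j hj
      exact Finset.mem_of_mem_filter j ((Finset.filter_subset _ _) hj)
    have hterm : ∀ j ∈ Fk, min 1 (len i ^ α / dd i j ^ α) ≤ (max 1 (k:ℝ)) ^ (-α) := by
      intro j hj
      rcases Nat.eq_zero_or_pos k with rfl | hkpos
      · have hmax : (max 1 ((0:ℕ):ℝ)) = 1 := by norm_num
        rw [hmax, Real.one_rpow]
        exact min_le_left _ _
      · have hk1 : (1:ℝ) ≤ (k:ℝ) := by exact_mod_cast hkpos
        have hmax : max 1 (k:ℝ) = (k:ℝ) := max_eq_right hk1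
        have hdd := (hfiber k j hj).2.1
        have hddpos : 0 < dd i j := lt_of_lt_of_le (by positivity) hdd
        have hkpos' : (0:ℝ) < (k:ℝ) := by linarith
        rw [hmax]
        calc min 1 (len i ^ α / dd i j ^ α) ≤ len i ^ α / dd i j ^ α := min_le_right _ _
          _ = (ℓ / dd i j) ^ α := (Real.div_rpow hℓpos.le (hddnn j) α).symm
          _ ≤ ((1:ℝ) / (k:ℝ)) ^ α := by
              apply Real.rpow_le_rpow (by positivity) _ (by linarith)
              rw [div_le_div_iff₀ hddpos hkpos']
              nlinarith [hdd]
          _ = (k:ℝ) ^ (-α) := by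
              rw [one_div, Real.inv_rpow hkpos'.le, ← Real.rpow_neg hkpos'.le]
    have hrpow_nn : 0 ≤ (max 1 (k:ℝ)) ^ (-α) :=
      Real.rpow_nonneg (le_max_of_le_left zero_le_one) _
    have hcard : (Fk.card : ℝ) ≤ 4608 * ((k:ℝ)+1) :=
      fiber_card_bound hMST hi k Fk hFkS (fun j hj => hfiber k j hj)
    calc (∑ j ∈ Fk, min 1 (len i ^ α / dd i j ^ α))
        ≤ ∑ _j ∈ Fk, (max 1 (k:ℝ)) ^ (-α) := Finset.sum_le_sum hterm
      _ = (Fk.card : ℝ) * (max 1 (k:ℝ)) ^ (-α) := by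
          rw [Finset.sum_const, nsmul_eq_mul]
      _ ≤ (4608 * ((k:ℝ)+1)) * (max 1 (k:ℝ)) ^ (-α) :=
          mul_le_mul_of_nonneg_right hcard hrpow_nn
      _ = 4608 * g k := by rw [hg]; ring
  calc (∑ k ∈ F.image κ, ∑ j ∈ F.filter (fun j => κ j = k), min 1 (len i ^ α / dd i j ^ α))
      ≤ ∑ k ∈ F.image κ, 4608 * g k := Finset.sum_le_sum keybound
    _ ≤ ∑' k, 4608 * g k :=
        Summable.sum_le_tsum _ (fun k _ => mul_nonneg (by norm_num) (hgnonneg k)) (hgsum.mul_left 4608)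
    _ = 4608 * ∑' k, g k := tsum_mul_left

end MSTProof

/-- (MST sparsity.) There is a constant `C` depending only on `α > 2` such
that in any arbitrarily-oriented MST `S` of a planar pointset, the capped interference on any
link from the not-shorter links of `S` is at most `C`. -/
theorem mst_sparsity (α : ℝ) (hα : 2 < α) :
    ∃ C : ℝ, ∀ R : Finset Pt, 2 ≤ R.card →
      ∀ S : Finset Link, IsMSTLinks R S →
        ∀ i ∈ S,
          ∑ j ∈ S.filter (fun j => j ≠ i ∧ len i ≤ len j),
            min 1 (len i ^ α / dd i j ^ α) ≤ C := by
  exact mst_sparsity_main α hα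
end
end

section
/- Fix α > 2, β > 0, τ ∈ (0,1), and let τ' = min{τ, 1−τ}. There exists x₀ > 0 depending only on α, β, τ such that for every x ≥ x₀ and every n ≥ 2 the following holds. Let p_1 < p_2 < … < p_n be points on the real line with gaps p_{t+1} − p_t = x^{(1/τ')^{t−1}} for t = 1, …, n−1. Then for any two links i, j whose four endpoints are among {p_1, …, p_n} and which do not share an endpoint, the pair {i, j} is not P_τ-feasible. -/
noncomputable section

open scoped BigOperators

lemma emb_dist (a b : ℝ) : dist (emb a) (emb b) = |a - b| := by
  rw [EuclideanSpace.dist_eq]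
  simp [emb, Fin.sum_univ_two, Real.sqrt_sq_eq_abs, Real.dist_eq]

lemma contra {α β τ li lj D : ℝ} (hα : 0 < α) (hβ : 0 < β) (hli : 0 < li) (hlj : 0 < lj)
    (hD : 0 < D)
    (hfe : β * (lj ^ (τ * α) / D ^ α) ≤ li ^ (τ * α) / li ^ α)
    (hgeo : D < β ^ α⁻¹ * (lj ^ τ * li ^ (1 - τ))) : False := by
  have hDα : D ^ α < β * (lj ^ (τ * α) * li ^ ((1 - τ) * α)) := by
    have h1 : D ^ α < (β ^ α⁻¹ * (lj ^ τ * li ^ (1 - τ))) ^ α :=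
      Real.rpow_lt_rpow hD.le hgeo (by linarith)
    calc D ^ α < _ := h1
      _ = β * (lj ^ (τ * α) * li ^ ((1 - τ) * α)) := by
        rw [Real.mul_rpow (by positivity) (by positivity),
            Real.mul_rpow (by positivity) (by positivity),
            ← Real.rpow_mul hβ.le, ← Real.rpow_mul hlj.le, ← Real.rpow_mul hli.le,
            inv_mul_cancel₀ (by linarith : α ≠ 0), Real.rpow_one]
  have h2 : β * lj ^ (τ * α) * li ^ α ≤ li ^ (τ * α) * D ^ α := by
    rw [mul_div_assoc', div_le_div_iff₀ (Real.rpow_pos_of_pos hD α)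
      (Real.rpow_pos_of_pos hli α)] at hfe
    exact hfe
  have h3 := mul_lt_mul_of_pos_left hDα (Real.rpow_pos_of_pos hli (τ * α))
  have h4 : li ^ (τ * α) * li ^ ((1 - τ) * α) = li ^ α := by
    rw [← Real.rpow_add hli]; ring_nf
  have h5 : li ^ (τ * α) * (β * (lj ^ (τ * α) * li ^ ((1 - τ) * α)))
      = β * lj ^ (τ * α) * li ^ α := by rw [← h4]; ring
  rw [h5] at h3
  linarith

set_option maxHeartbeats 1000000 in
/-- On the doubly-exponential chain of points on the line (gaps
`x^{(1/τ')^{t-1}}` where `τ' = min{τ, 1-τ}`), for `x` large enough no two node-disjoint links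
with endpoints among the chain points can be simultaneously `P_τ`-feasible. -/
theorem doubly_exponential_chain_no_parallel_links (α β τ : ℝ)
    (hα : 2 < α) (hβ : 0 < β) (hτ : τ ∈ Set.Ioo (0 : ℝ) 1) :
    ∃ x₀ : ℝ, 0 < x₀ ∧ ∀ x : ℝ, x₀ ≤ x → ∀ n : ℕ, 2 ≤ n →
      ∀ p : ℕ → ℝ,
        (∀ t : ℕ, t + 1 < n → p (t + 1) - p t = x ^ ((1 / min τ (1 - τ)) ^ t)) →
        ∀ i j : Link,
          i.1 ∈ (Finset.range n).image (fun t => emb (p t)) →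
          i.2 ∈ (Finset.range n).image (fun t => emb (p t)) →
          j.1 ∈ (Finset.range n).image (fun t => emb (p t)) →
          j.2 ∈ (Finset.range n).image (fun t => emb (p t)) →
          i.1 ≠ i.2 → j.1 ≠ j.2 → NodeDisjoint i j →
          ¬ PFeasible α β {i, j} (oblPower α τ) := by
  obtain ⟨hτ0, hτ1⟩ := hτ
  set τ' : ℝ := min τ (1 - τ) with hτ'def
  have hτ'0 : 0 < τ' := lt_min hτ0 (by linarith)
  have hτ'τ : τ' ≤ τ := min_le_left _ _
  have hτ'1τ : τ' ≤ 1 - τ := min_le_right _ _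
  have hτ'h : τ' ≤ 1 / 2 := by
    rcases le_or_gt τ (1/2) with h | h
    · exact le_trans hτ'τ h
    · linarith [hτ'1τ]
  have hρ2 : 2 ≤ 1 / τ' := by
    rw [le_div_iff₀ hτ'0]; linarith
  set c0 : ℝ := β ^ α⁻¹ with hc0def
  have hc0 : 0 < c0 := Real.rpow_pos_of_pos hβ _
  refine ⟨max 2 ((2 / c0) ^ τ'⁻¹ + 1), lt_of_lt_of_le two_pos (le_max_left _ _), ?_⟩
  intro x hx n hn p hp i j hi1 hi2 hj1 hj2 hii hjj hdisj hPf
  have hx2 : (2 : ℝ) ≤ x := le_trans (le_max_left _ _) hx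
  have hx1 : (1 : ℝ) ≤ x := by linarith
  have hx0 : (0 : ℝ) < x := by linarith
  have hbig : 2 < c0 * x ^ τ' := by
    have hA : (2 / c0) ^ τ'⁻¹ < x := by
      have := le_trans (le_max_right 2 ((2 / c0) ^ τ'⁻¹ + 1)) hx
      linarith
    have h1 : ((2 / c0) ^ τ'⁻¹) ^ τ' < x ^ τ' :=
      Real.rpow_lt_rpow (Real.rpow_nonneg (by positivity) _) hA hτ'0
    rw [← Real.rpow_mul (by positivity), inv_mul_cancel₀ hτ'0.ne', Real.rpow_one] at h1
    calc (2 : ℝ) = c0 * (2 / c0) := by field_simp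
      _ < c0 * x ^ τ' := mul_lt_mul_of_pos_left h1 hc0
  -- the gap function
  set g : ℕ → ℝ := fun t => x ^ ((1 / τ') ^ t) with hgdef
  have hp' : ∀ t : ℕ, t + 1 < n → p (t + 1) - p t = g t := hp
  have hg_pos : ∀ t, 0 < g t := fun t => Real.rpow_pos_of_pos hx0 _
  have hρpow1 : ∀ t : ℕ, (1 : ℝ) ≤ (1 / τ') ^ t := fun t => one_le_pow₀ (by linarith)
  have hg_mono : ∀ s t : ℕ, s ≤ t → g s ≤ g t := by
    intro s t hst
    exact Real.rpow_le_rpow_of_exponent_le hx1 (pow_le_pow_right₀ (by linarith) hst)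
  have hg0 : g 0 = x := by
    show x ^ ((1 / τ') ^ 0) = x
    rw [pow_zero, Real.rpow_one]
  have hg_step : ∀ t, 2 * g t ≤ g (t + 1) := by
    intro t
    have he : (1 / τ') ^ t + 1 ≤ (1 / τ') ^ (t + 1) := by
      have := hρpow1 t
      rw [pow_succ]; nlinarith
    have h1 : x ^ ((1 / τ') ^ t + 1) ≤ x ^ ((1 / τ') ^ (t + 1)) :=
      Real.rpow_le_rpow_of_exponent_le hx1 he
    rw [Real.rpow_add hx0, Real.rpow_one] at h1
    have h2 : 2 * g t ≤ g t * x := by nlinarith [hg_pos t]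
    exact le_trans h2 h1
  have hg_sum : ∀ m : ℕ, ∑ t ∈ Finset.range (m + 1), g t ≤ 2 * g m := by
    intro m
    induction m with
    | zero => rw [Finset.sum_range_one]; nlinarith [hg_pos 0]
    | succ m ih =>
        rw [Finset.sum_range_succ]
        have := hg_step m
        linarith
  -- telescoping
  have hP : ∀ d u : ℕ, u + d < n → p (u + d) - p u = ∑ t ∈ Finset.Ico u (u + d), g t := by
    intro d
    induction d with
    | zero => intro u _; simp
    | succ d ih =>
        intro u hu
        have h1 := ih u (by omega)
        have h2 := hp' (u + d) (by omega)
        rw [show u + (d + 1) = (u + d) + 1 by ring,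
          Finset.sum_Ico_succ_top (by omega : u ≤ u + d), ← h1]
        linarith
  have hlow : ∀ u v : ℕ, u < v → v < n → g (v - 1) ≤ p v - p u := by
    intro u v huv hv
    have h1 := hP (v - u) u (by omega)
    rw [show u + (v - u) = v by omega] at h1
    rw [h1]
    refine Finset.single_le_sum (fun t _ => (hg_pos t).le) ?_
    simp only [Finset.mem_Ico]; omega
  have hupp : ∀ u v : ℕ, u < v → v < n → p v - p u ≤ 2 * g (v - 1) := by
    intro u v huv hv
    have h1 := hP (v - u) u (by omega)
    rw [show u + (v - u) = v by omega] at h1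
    rw [h1]
    calc ∑ t ∈ Finset.Ico u v, g t ≤ ∑ t ∈ Finset.range ((v - 1) + 1), g t := by
          refine Finset.sum_le_sum_of_subset_of_nonneg ?_ (fun t _ _ => (hg_pos t).le)
          intro t ht
          simp only [Finset.mem_Ico] at ht
          simp only [Finset.mem_range]; omega
      _ ≤ 2 * g (v - 1) := hg_sum _
  have hdlow : ∀ u v : ℕ, u < v → v < n → g (v - 1) ≤ |p u - p v| := by
    intro u v huv hv
    rw [abs_sub_comm, abs_of_nonneg (by linarith [hlow u v huv hv, hg_pos (v - 1)])]
    exact hlow u v huv hv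
  have hd_x : ∀ u v : ℕ, u < n → v < n → u ≠ v → x ≤ |p u - p v| := by
    intro u v hu hv huv
    rcases lt_or_gt_of_ne huv with h | h
    · calc x = g 0 := hg0.symm
        _ ≤ g (v - 1) := hg_mono 0 _ (by omega)
        _ ≤ _ := hdlow u v h hv
    · rw [abs_sub_comm]
      calc x = g 0 := hg0.symm
        _ ≤ g (u - 1) := hg_mono 0 _ (by omega)
        _ ≤ _ := hdlow v u h hu
  -- extract indices
  simp only [Finset.mem_image, Finset.mem_range] at hi1 hi2 hj1 hj2
  obtain ⟨a, han, hae⟩ := hi1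
  obtain ⟨b, hbn, hbe⟩ := hi2
  obtain ⟨c, hcn, hce⟩ := hj1
  obtain ⟨d, hdn, hde⟩ := hj2
  obtain ⟨hd1, hd2, hd3, hd4⟩ := hdisj
  have hab : a ≠ b := fun h => hii (by rw [← hae, ← hbe, h])
  have hcd : c ≠ d := fun h => hjj (by rw [← hce, ← hde, h])
  have hac : a ≠ c := fun h => hd1 (by rw [← hae, ← hce, h])
  have had : a ≠ d := fun h => hd2 (by rw [← hae, ← hde, h])
  have hbc : b ≠ c := fun h => hd3 (by rw [← hbe, ← hce, h])
  have hbd : b ≠ d := fun h => hd4 (by rw [← hbe, ← hde, h])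
  set M : ℕ := max (max a b) (max c d) with hMdef
  have hM3 : 3 ≤ M := by omega
  have hMn : M < n := by omega
  have hDbound : ∀ u v : ℕ, u < M → v < M → u ≠ v → |p u - p v| ≤ 2 * g (M - 2) := by
    intro u v hu hv huv
    have key : ∀ u v : ℕ, u < v → v < M → p v - p u ≤ 2 * g (M - 2) := by
      intro u v huv hv
      calc p v - p u ≤ 2 * g (v - 1) := hupp u v huv (by omega)
        _ ≤ 2 * g (M - 2) := by nlinarith [hg_mono (v - 1) (M - 2) (by omega : v - 1 ≤ M - 2)]
    rcases lt_or_gt_of_ne huv with h | h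
    · rw [abs_sub_comm, abs_of_nonneg (by linarith [hlow u v h (by omega), hg_pos (v - 1)])]
      exact key u v h hv
    · rw [abs_of_nonneg (by linarith [hlow v u h (by omega), hg_pos (u - 1)])]
      exact key v u h hu
  -- exponent helpers
  have hAx : ∀ ℓ e : ℝ, x ≤ ℓ → τ' ≤ e → x ^ τ' ≤ ℓ ^ e := by
    intro ℓ e hℓ he
    calc x ^ τ' ≤ x ^ e := Real.rpow_le_rpow_of_exponent_le hx1 he
      _ ≤ ℓ ^ e := Real.rpow_le_rpow hx0.le hℓ (by linarith)
  have hBg : ∀ L e : ℝ, g (M - 1) ≤ L → τ' ≤ e → g (M - 2) ≤ L ^ e := by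
    intro L e hL he
    have h1 : g (M - 2) ≤ g (M - 1) ^ e := by
      show x ^ ((1 / τ') ^ (M - 2)) ≤ (x ^ ((1 / τ') ^ (M - 1))) ^ e
      rw [← Real.rpow_mul hx0.le]
      refine Real.rpow_le_rpow_of_exponent_le hx1 ?_
      have hps : (1 / τ') ^ (M - 1) = (1 / τ') ^ (M - 2) * (1 / τ') := by
        rw [← pow_succ]; congr 1; omega
      have hmul : 1 ≤ (1 / τ') * e := by
        have h0 : (1 / τ') * τ' = 1 := by field_simp
        nlinarith
      rw [hps]
      nlinarith [hρpow1 (M - 2)]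
    calc g (M - 2) ≤ g (M - 1) ^ e := h1
      _ ≤ L ^ e := Real.rpow_le_rpow (hg_pos _).le hL (by linarith)
  -- master geometric bound
  have hgeo : ∀ u v : ℕ, u < M → v < M → u ≠ v → ∀ A B : ℝ,
      x ^ τ' ≤ A → g (M - 2) ≤ B → |p u - p v| < c0 * (A * B) := by
    intro u v hu hv huv A B hA hB
    have hxτ : (0 : ℝ) < x ^ τ' := Real.rpow_pos_of_pos hx0 _
    have hAB : x ^ τ' * g (M - 2) ≤ A * B :=
      mul_le_mul hA hB (hg_pos _).le (by linarith)
    calc |p u - p v| ≤ 2 * g (M - 2) := hDbound u v hu hv huv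
      _ < (c0 * x ^ τ') * g (M - 2) := by nlinarith [hg_pos (M - 2)]
      _ = c0 * (x ^ τ' * g (M - 2)) := by ring
      _ ≤ c0 * (A * B) := mul_le_mul_of_nonneg_left hAB hc0.le
  -- the two feasibility inequalities
  have hij : i ≠ j := fun h => hd1 (by rw [h])
  have herase_i : ({i, j} : Finset Link).erase i = {j} :=
    Finset.erase_insert (Finset.notMem_singleton.mpr hij)
  have herase_j : ({i, j} : Finset Link).erase j = {i} := by
    rw [Finset.pair_comm]
    exact Finset.erase_insert (Finset.notMem_singleton.mpr (Ne.symm hij))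
  have hfeA := hPf.2 i (Finset.mem_insert_self i {j})
  have hfeB := hPf.2 j (Finset.mem_insert_of_mem (Finset.mem_singleton_self j))
  rw [herase_i, Finset.sum_singleton] at hfeA
  rw [herase_j, Finset.sum_singleton] at hfeB
  simp only [oblPower] at hfeA hfeB
  -- positivity and distance identities
  have hli : 0 < len i := dist_pos.mpr hii
  have hlj : 0 < len j := dist_pos.mpr hjj
  have hDA : 0 < dist j.1 i.2 := dist_pos.mpr (Ne.symm hd3)
  have hDB : 0 < dist i.1 j.2 := dist_pos.mpr hd2
  have hleni : len i = |p a - p b| := by rw [len, ← hae, ← hbe, emb_dist]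
  have hlenj : len j = |p c - p d| := by rw [len, ← hce, ← hde, emb_dist]
  have hDAe : dist j.1 i.2 = |p c - p b| := by rw [← hce, ← hbe, emb_dist]
  have hDBe : dist i.1 j.2 = |p a - p d| := by rw [← hae, ← hde, emb_dist]
  have hlix : x ≤ len i := by rw [hleni]; exact hd_x a b han hbn hab
  have hljx : x ≤ len j := by rw [hlenj]; exact hd_x c d hcn hdn hcd
  have hα0 : (0 : ℝ) < α := by linarith
  have hMcase : M = a ∨ M = b ∨ M = c ∨ M = d := by omega
  rcases hMcase with hMa | hMb | hMc | hMd
  · -- M = a : use condition for link i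
    have hLi : g (M - 1) ≤ len i := by
      rw [hleni, abs_sub_comm, show M - 1 = a - 1 by omega]
      exact hdlow b a (by omega) han
    have h := hgeo c b (by omega) (by omega) hbc.symm (len j ^ τ) (len i ^ (1 - τ))
      (hAx _ _ hljx hτ'τ) (hBg _ _ hLi hτ'1τ)
    rw [← hDAe] at h
    exact contra hα0 hβ hli hlj hDA hfeA h
  · -- M = b : use condition for link j
    have hLi : g (M - 1) ≤ len i := by
      rw [hleni, show M - 1 = b - 1 by omega]
      exact hdlow a b (by omega) hbn
    have h := hgeo a d (by omega) (by omega) had (len j ^ (1 - τ)) (len i ^ τ)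
      (hAx _ _ hljx hτ'1τ) (hBg _ _ hLi hτ'τ)
    rw [← hDBe, mul_comm (len j ^ (1 - τ)) (len i ^ τ)] at h
    exact contra hα0 hβ hlj hli hDB hfeB h
  · -- M = c : use condition for link j
    have hLj : g (M - 1) ≤ len j := by
      rw [hlenj, abs_sub_comm, show M - 1 = c - 1 by omega]
      exact hdlow d c (by omega) hcn
    have h := hgeo a d (by omega) (by omega) had (len i ^ τ) (len j ^ (1 - τ))
      (hAx _ _ hlix hτ'τ) (hBg _ _ hLj hτ'1τ)
    rw [← hDBe] at h
    exact contra hα0 hβ hlj hli hDB hfeB h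
  · -- M = d : use condition for link i
    have hLj : g (M - 1) ≤ len j := by
      rw [hlenj, show M - 1 = d - 1 by omega]
      exact hdlow c d (by omega) hdn
    have h := hgeo c b (by omega) (by omega) hbc.symm (len i ^ (1 - τ)) (len j ^ τ)
      (hAx _ _ hlix hτ'1τ) (hBg _ _ hLj hτ'τ)
    rw [← hDAe, mul_comm (len i ^ (1 - τ)) (len j ^ τ)] at h
    exact contra hα0 hβ hli hlj hDA hfeA h
end
end
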